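/- arXiv:2008.09822 — 5 statements merged into one kernel-verified Lean document; each statement's English description precedes it below -/
import Mathlib

section
/- Let G be a finite simple graph that is not complete, let S be a minimal separator of G with |S| ≥ 2·tw(G) + 1, and let S' be a set of vertices of G with |S'| ≤ tw(G) + 1 such that G[S ∖ S'] has more than one connected component and every connected component C' of G ∖ S' satisfies |V(C') ∩ S| ≤ |S|/2. Then |S'| + td(G ∖ S') ≤ |S| + td(G ∖ S). -/
open SimpleGraph

attribute [local instance] Classical.propDecidable

noncomputable section

/-- A rooted forest on a vertex type `V`, given by a parent map together with a
depth function (the depth of a root is `1`, and the depth of a child is the depth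
of its parent plus one).  The existence of such a depth function guarantees that
the parent map is acyclic, i.e. that the structure really is a rooted forest. -/
structure RootedForest (V : Type) where
  parent : V → Option V
  depth : V → ℕ
  depth_root : ∀ v, parent v = none → depth v = 1
  depth_parent : ∀ v u, parent v = some u → depth v = depth u + 1

namespace RootedForest

variable {V : Type}

/-- `T.Ancestor u v` means that `u` is a (reflexive) ancestor of `v` in `T`. -/
def Ancestor (T : RootedForest V) (u v : V) : Prop :=
  Relation.ReflTransGen (fun a b => T.parent a = some b) v u

/-- The height of a rooted forest: the maximum number of vertices on a
root-to-leaf path of one of its trees (0 for the empty forest). -/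
def height (T : RootedForest V) [Fintype V] : ℕ :=
  Finset.univ.sup T.depth

/-- The number of children of a vertex. -/
def childCount (T : RootedForest V) [Fintype V] (u : V) : ℕ :=
  (Finset.univ.filter (fun v => T.parent v = some u)).card

/-- The set of vertices of depth at most `d` in `T`. -/
def top (T : RootedForest V) (d : ℕ) : Set V := {v | T.depth v ≤ d}

/-- `T` is a rooted tree if it has exactly one root. -/
def IsTree (T : RootedForest V) : Prop := ∃! r, T.parent r = none

/-- The top separator of a rooted tree `T`: if no vertex of `T` has more than one
child (i.e. `T` is a path), it is all of `V(T)`; otherwise it is the set of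
vertices of depth at most the depth of the minimum-depth vertex having more than
one child. -/
def topSep (T : RootedForest V) [Fintype V] : Finset V :=
  if _ : ∃ p, 2 ≤ T.childCount p then
    Finset.univ.filter
      (fun v => T.depth v ≤ sInf {d | ∃ p, 2 ≤ T.childCount p ∧ T.depth p = d})
  else Finset.univ

end RootedForest

/-- `T` is a treedepth decomposition of `G`: a rooted forest on the vertex set of
`G` such that the endpoints of every edge of `G` are in ancestor-descendant
relation. -/
def IsTDDecomp {V : Type} (G : SimpleGraph V) (T : RootedForest V) : Prop :=
  ∀ u v, G.Adj u v → T.Ancestor u v ∨ T.Ancestor v u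

/-- The treedepth of a finite graph: the minimum height of a treedepth
decomposition of `G`. -/
def treedepth {V : Type} [Fintype V] (G : SimpleGraph V) : ℕ :=
  sInf {h | ∃ T : RootedForest V, IsTDDecomp G T ∧ T.height = h}

/-- `(T, f)` is a tree decomposition of `G`. -/
def IsTreeDecomp {V ι : Type} (G : SimpleGraph V) (T : SimpleGraph ι)
    (f : ι → Finset V) : Prop :=
  T.IsTree ∧
  (∀ v, ∃ i, v ∈ f i) ∧
  (∀ u v, G.Adj u v → ∃ i, u ∈ f i ∧ v ∈ f i) ∧
  (∀ v, (T.induce {i | v ∈ f i}).Connected)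

/-- The treewidth of a finite graph: the minimum over all tree decompositions of
(maximum bag size minus one), phrased as the least `w` such that `G` has a tree
decomposition all of whose bags have at most `w + 1` vertices. -/
def treewidth {V : Type} [Fintype V] (G : SimpleGraph V) : ℕ :=
  sInf {w | ∃ (ι : Type) (_ : Fintype ι) (T : SimpleGraph ι) (f : ι → Finset V),
    IsTreeDecomp G T f ∧ ∀ i, (f i).card ≤ w + 1}

/-- `S` is an `a`-`b` separator of `G`: `a, b ∉ S` and every walk from `a` to `b`
meets `S` (i.e. `a` and `b` lie in different connected components of `G ∖ S`). -/
def IsABSep {V : Type} (G : SimpleGraph V) (a b : V) (S : Finset V) : Prop :=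
  a ∉ S ∧ b ∉ S ∧ ∀ w : G.Walk a b, ∃ x ∈ w.support, x ∈ S

/-- `S` is a minimal separator of `G`: for some vertices `a, b`, it is an
`a`-`b` separator no proper subset of which is an `a`-`b` separator. -/
def IsMinSep {V : Type} (G : SimpleGraph V) (S : Finset V) : Prop :=
  ∃ a b, IsABSep G a b S ∧ ∀ S' ⊂ S, ¬ IsABSep G a b S'

/-- The grid graph `P_m × P_n`, with vertex set
`{(i,j) : 1 ≤ i ≤ n, 1 ≤ j ≤ m}` and edges between vertices at ℓ1-distance 1. -/
def gridGraph (n m : ℕ) : SimpleGraph (Fin n × Fin m) where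
  Adj a b := Nat.dist a.1.val b.1.val + Nat.dist a.2.val b.2.val = 1
  symm := by
    constructor
    intro a b h
    rwa [Nat.dist_comm b.1.val, Nat.dist_comm b.2.val]
  loopless := by constructor; intro a h; simp [Nat.dist_self] at h


/-- Vertices of the broom: grid vertices plus, for each row `i`, a path on `2^k - 1` vertices. -/
abbrev BroomV (n m k : ℕ) : Type := (Fin n × Fin m) ⊕ (Fin n × Fin (2 ^ k - 1))

/-- The broom `B_{n,m,k}`. -/
def broom (n m k : ℕ) : SimpleGraph (BroomV n m k) :=
  SimpleGraph.fromRel (fun x y =>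
    match x, y with
    | .inl a, .inl b => (gridGraph n m).Adj a b
    | .inl a, .inr b => a.1 = b.1 ∧ a.2.val = m - 1 ∧ b.2.val = 0
    | .inr a, .inr b => a.1 = b.1 ∧ a.2.val + 1 = b.2.val
    | .inr _, .inl _ => False)

/-- Vertices of the double broom: grid vertices plus, for each row `i`, a path
attached at `(i,1)` (first summand) and a path attached at `(i,m)` (second summand). -/
abbrev DBroomV (n m k : ℕ) : Type :=
  (Fin n × Fin m) ⊕ (Fin n × Fin (2 ^ k - 1)) ⊕ (Fin n × Fin (2 ^ k - 1))

/-- The double broom `D_{n,m,k}`. -/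
def dbroom (n m k : ℕ) : SimpleGraph (DBroomV n m k) :=
  SimpleGraph.fromRel (fun x y =>
    match x, y with
    | .inl a, .inl b => (gridGraph n m).Adj a b
    | .inl a, .inr (.inl b) => a.1 = b.1 ∧ a.2.val = 0 ∧ b.2.val = 0
    | .inl a, .inr (.inr b) => a.1 = b.1 ∧ a.2.val = m - 1 ∧ b.2.val = 0
    | .inr (.inl a), .inr (.inl b) => a.1 = b.1 ∧ a.2.val + 1 = b.2.val
    | .inr (.inr a), .inr (.inr b) => a.1 = b.1 ∧ a.2.val + 1 = b.2.val
    | _, _ => False)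

/-- Vertices of the graph `G_{n,m,k,l}`: grid vertices, plus a path on `2^k - 1`
vertices for every triple (row `i`, end `e ∈ {1,m}`, vertex `w ∈ W`), plus the
set `W` of `l` new vertices. -/
abbrev CornerV (n m k l : ℕ) : Type :=
  (Fin n × Fin m) ⊕ ((Fin n × Fin 2 × Fin l) × Fin (2 ^ k - 1)) ⊕ Fin l

/-- The graph `G_{n,m,k,l}`. -/
def corner (n m k l : ℕ) : SimpleGraph (CornerV n m k l) :=
  SimpleGraph.fromRel (fun x y =>
    match x, y with
    | .inl a, .inl b => (gridGraph n m).Adj a b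
    | .inl a, .inr (.inl (⟨i, e, _⟩, t)) =>
        a.1 = i ∧ t.val = 0 ∧
          ((e.val = 0 ∧ a.2.val = 0) ∨ (e.val = 1 ∧ a.2.val = m - 1))
    | .inr (.inl (p, t)), .inr (.inl (q, s)) => p = q ∧ t.val + 1 = s.val
    | .inr (.inl (⟨_, _, w⟩, t)), .inr (.inr w') => w = w' ∧ t.val = 2 ^ k - 2
    | _, _ => False)

/-- `H` is a minor of `G`: there are pairwise disjoint connected branch sets in
`G`, one for each vertex of `H`, such that adjacent vertices of `H` have
adjacent branch sets. -/
def IsMinor {W V : Type} (H : SimpleGraph W) (G : SimpleGraph V) : Prop :=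
  ∃ B : W → Set V,
    (∀ w, (G.induce (B w)).Connected) ∧
    (∀ w w', w ≠ w' → Disjoint (B w) (B w')) ∧
    (∀ w w', H.Adj w w' → ∃ u ∈ B w, ∃ v ∈ B w', G.Adj u v)

/-- A graph is chordal if it has no induced cycle of length four or more. -/
def IsChordal {V : Type} (G : SimpleGraph V) : Prop :=
  ∀ c : ℕ, 4 ≤ c → IsEmpty (SimpleGraph.cycleGraph c ↪g G)

/-- A graph is a cograph if it has no induced path on four vertices. -/
def IsCograph {V : Type} (G : SimpleGraph V) : Prop :=
  IsEmpty (SimpleGraph.pathGraph 4 ↪g G)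

/-- A graph is outerplanar iff it contains neither `K₄` nor `K_{2,3}` as a minor. -/
def IsOuterplanar {V : Type} (G : SimpleGraph V) : Prop :=
  ¬ IsMinor (⊤ : SimpleGraph (Fin 4)) G ∧
  ¬ IsMinor (completeBipartiteGraph (Fin 2) (Fin 3)) G

/-- The graph obtained from `G'` and the path on `p` vertices by adding a single
edge between `u ∈ V(G')` and a path vertex `v`. -/
def attachPath {V' : Type} (G' : SimpleGraph V') (p : ℕ) (u : V') (v : Fin p) :
    SimpleGraph (V' ⊕ Fin p) :=
  SimpleGraph.fromRel (fun x y =>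
    match x, y with
    | .inl a, .inl b => G'.Adj a b
    | .inr a, .inr b => a.val + 1 = b.val
    | .inl a, .inr b => a = u ∧ b = v
    | .inr _, .inl _ => False)



namespace RootedForest

variable {W : Type} (T : RootedForest W) (K : Set W)

theorem depth_lt {v u : W} (h : T.parent v = some u) : T.depth u < T.depth v := by
  rw [T.depth_parent v u h]; omega

/-- The nearest strict ancestor of `v` lying in `K`. -/
def skipAux (v : W) : Option W :=
  match h : T.parent v with
  | none => none
  | some u => if u ∈ K then some u else skipAux u
termination_by T.depth v
decreasing_by exact T.depth_lt h

/-- The number of (reflexive) ancestors of `v` lying in `K`. -/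
def cntAux (v : W) : ℕ :=
  (if v ∈ K then 1 else 0) +
  match h : T.parent v with
  | none => 0
  | some u => cntAux u
termination_by T.depth v
decreasing_by exact T.depth_lt h

lemma skipAux_root {v : W} (h : T.parent v = none) : T.skipAux K v = none := by
  rw [skipAux, h]

lemma skipAux_parent {v u : W} (h : T.parent v = some u) :
    T.skipAux K v = if u ∈ K then some u else T.skipAux K u := by
  rw [skipAux, h]

lemma cntAux_root {v : W} (h : T.parent v = none) :
    T.cntAux K v = (if v ∈ K then 1 else 0) := by
  rw [cntAux, h]; rfl

lemma cntAux_parent {v u : W} (h : T.parent v = some u) :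
    T.cntAux K v = (if v ∈ K then 1 else 0) + T.cntAux K u := by
  rw [cntAux, h]

lemma skip_mem : ∀ v u, T.skipAux K v = some u → u ∈ K := by
  intro v
  induction v using RootedForest.skipAux.induct (T := T) (K := K) with
  | case1 v hp => intro u h; rw [skipAux_root T K hp] at h; simp at h
  | case2 v w hp hw =>
    intro u h; rw [skipAux_parent T K hp, if_pos hw] at h
    simp at h; subst h; exact hw
  | case3 v w hp hw ih =>
    intro u h; rw [skipAux_parent T K hp, if_neg hw] at h; exact ih u h

lemma skip_anc : ∀ v u, T.skipAux K v = some u →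
    T.Ancestor u v ∧ T.depth u < T.depth v := by
  intro v
  induction v using RootedForest.skipAux.induct (T := T) (K := K) with
  | case1 v hp => intro u h; rw [skipAux_root T K hp] at h; simp at h
  | case2 v w hp hw =>
    intro u h; rw [skipAux_parent T K hp, if_pos hw] at h; simp at h; subst h
    exact ⟨Relation.ReflTransGen.single hp, T.depth_lt hp⟩
  | case3 v w hp hw ih =>
    intro u h; rw [skipAux_parent T K hp, if_neg hw] at h
    obtain ⟨h1, h2⟩ := ih u h
    exact ⟨Relation.ReflTransGen.head hp h1, h2.trans (T.depth_lt hp)⟩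

lemma cnt_skip_some : ∀ v u, T.skipAux K v = some u →
    T.cntAux K v = (if v ∈ K then 1 else 0) + T.cntAux K u := by
  intro v
  induction v using RootedForest.skipAux.induct (T := T) (K := K) with
  | case1 v hp => intro u h; rw [skipAux_root T K hp] at h; simp at h
  | case2 v w hp hw =>
    intro u h; rw [skipAux_parent T K hp, if_pos hw] at h; simp at h; subst h
    rw [cntAux_parent T K hp]
  | case3 v w hp hw ih =>
    intro u h; rw [skipAux_parent T K hp, if_neg hw] at h
    rw [cntAux_parent T K hp, ih u h, if_neg hw]; omega

lemma cnt_skip_none : ∀ v, T.skipAux K v = none →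
    T.cntAux K v = (if v ∈ K then 1 else 0) := by
  intro v
  induction v using RootedForest.skipAux.induct (T := T) (K := K) with
  | case1 v hp => intro _; rw [cntAux_root T K hp]
  | case2 v w hp hw =>
    intro h; rw [skipAux_parent T K hp, if_pos hw] at h; simp at h
  | case3 v w hp hw ih =>
    intro h; rw [skipAux_parent T K hp, if_neg hw] at h
    rw [cntAux_parent T K hp, ih h, if_neg hw]; omega

lemma cnt_le_depth : ∀ v, T.cntAux K v ≤ T.depth v := by
  intro v
  induction v using RootedForest.cntAux.induct (T := T) with
  | _ v ih =>
    cases hp : T.parent v with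
    | none => rw [cntAux_root T K hp, T.depth_root v hp]; split <;> omega
    | some w =>
      have := ih w hp
      rw [cntAux_parent T K hp, T.depth_parent v w hp]; split <;> omega

lemma skip_reach {u w : W} (hanc : T.Ancestor u w) (hu : u ∈ K) (hw : w ∉ K) :
    ∃ u', T.skipAux K w = some u' ∧ T.Ancestor u u' := by
  unfold Ancestor at hanc
  induction hanc using Relation.ReflTransGen.head_induction_on with
  | refl => exact absurd hu hw
  | head hstep hrest ih =>
    rename_i a c
    by_cases hc : c ∈ K
    · exact ⟨c, by rw [skipAux_parent T K hstep, if_pos hc], hrest⟩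
    · obtain ⟨u', h1, h2⟩ := ih hc
      exact ⟨u', by rw [skipAux_parent T K hstep, if_neg hc]; exact h1, h2⟩

end RootedForest


section S6

open RootedForest

variable {V : Type} [Fintype V] [LinearOrder V] (G : SimpleGraph V) (S S' : Finset V)

/-- The component of `v` in `G - S'`. -/
def s6C (v : V) : Set V := {u | ∃ w : G.Walk v u, ∀ x ∈ w.support, x ∉ S'}

lemma s6C_notS' {v u : V} (h : u ∈ s6C G S' v) : u ∉ S' := by
  obtain ⟨w, hw⟩ := h; exact hw u w.end_mem_support

lemma s6C_self {v : V} (hv : v ∉ S') : v ∈ s6C G S' v :=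
  ⟨SimpleGraph.Walk.nil, by simp [hv]⟩

lemma s6C_symm {v u : V} (h : u ∈ s6C G S' v) : v ∈ s6C G S' u := by
  obtain ⟨w, hw⟩ := h
  refine ⟨w.reverse, fun x hx => ?_⟩
  rw [SimpleGraph.Walk.support_reverse] at hx
  exact hw x (List.mem_reverse.mp hx)

lemma s6C_trans {v u x : V} (h : u ∈ s6C G S' v) (h2 : x ∈ s6C G S' u) :
    x ∈ s6C G S' v := by
  obtain ⟨w1, hw1⟩ := h; obtain ⟨w2, hw2⟩ := h2
  refine ⟨w1.append w2, fun y hy => ?_⟩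
  rcases (SimpleGraph.Walk.mem_support_append_iff _ _).mp hy with h | h
  · exact hw1 y h
  · exact hw2 y h

lemma s6C_eq {v u : V} (h : u ∈ s6C G S' v) : s6C G S' u = s6C G S' v := by
  ext x
  exact ⟨fun hx => s6C_trans G S' h hx, fun hx => s6C_trans G S' (s6C_symm G S' h) hx⟩

lemma s6C_adj {v u : V} (h : G.Adj v u) (hv : v ∉ S') (hu : u ∉ S') : u ∈ s6C G S' v := by
  refine ⟨SimpleGraph.Walk.cons h SimpleGraph.Walk.nil, fun x hx => ?_⟩
  simp only [SimpleGraph.Walk.support_cons, SimpleGraph.Walk.support_nil,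
    List.mem_cons, List.mem_singleton, List.not_mem_nil, or_false] at hx
  rcases hx with rfl | rfl
  · exact hv
  · exact hu

/-- The vertices of `S` in the component of `v` in `G - S'`. -/
def s6A (v : V) : Finset V :=
  Finset.univ.filter (fun u : V => u ∈ S ∧ u ∉ S' ∧ u ∈ s6C G S' v)

lemma s6A_mem {v u : V} : u ∈ s6A G S S' v ↔ u ∈ S ∧ u ∉ S' ∧ u ∈ s6C G S' v := by
  simp [s6A]

lemma s6A_congr {v u : V} (h : u ∈ s6C G S' v) : s6A G S S' u = s6A G S S' v := by
  unfold s6A; simp only [s6C_eq G S' h]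

/-- The subset of the vertex set of `G - S` corresponding to the component of `v₀`. -/
def s6K (v₀ : V) : Set ↥{x : V | x ∉ S} := {u | (u : V) ∈ s6C G S' v₀}

lemma s6K_congr {v u : V} (h : u ∈ s6C G S' v) : s6K G S S' u = s6K G S S' v := by
  unfold s6K; simp only [s6C_eq G S' h]

def s6parent (T : RootedForest ↥{v : V | v ∉ S}) (v : ↥{v : V | v ∉ S'}) :
    Option ↥{v : V | v ∉ S'} :=
  if hvS : (v : V) ∈ S then
    if h : ((s6A G S S' v).filter (fun x => x < (v : V))).Nonempty then
      some ⟨((s6A G S S' v).filter (fun x => x < (v : V))).max' h, by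
        have hm := Finset.max'_mem _ h
        exact ((s6A_mem G S S').mp (Finset.mem_filter.mp hm).1).2.1⟩
    else none
  else
    match hsk : T.skipAux (s6K G S S' (v : V)) ⟨(v : V), hvS⟩ with
    | some u => some ⟨(u : V), s6C_notS' G S' (skip_mem T _ _ _ hsk)⟩
    | none =>
      if h : (s6A G S S' v).Nonempty then
        some ⟨(s6A G S S' v).max' h, ((s6A_mem G S S').mp (Finset.max'_mem _ h)).2.1⟩
      else none

def s6depth (T : RootedForest ↥{v : V | v ∉ S}) (v : ↥{v : V | v ∉ S'}) : ℕ :=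
  if hvS : (v : V) ∈ S then ((s6A G S S' v).filter (fun x => x ≤ (v : V))).card
  else (s6A G S S' v).card + T.cntAux (s6K G S S' (v : V)) ⟨(v : V), hvS⟩


lemma s6_depth_root (T : RootedForest ↥{v : V | v ∉ S}) :
    ∀ v, s6parent G S S' T v = none → s6depth G S S' T v = 1 := by
  intro v h
  unfold s6parent at h
  unfold s6depth
  split at h
  next hvS =>
    rw [dif_pos hvS]
    split at h
    next hF => simp at h
    next hF =>
      have hvA : (v : V) ∈ s6A G S S' (v : V) :=
        (s6A_mem G S S').mpr ⟨hvS, v.prop, s6C_self G S' v.prop⟩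
      have heq : (s6A G S S' (v : V)).filter (fun x => x ≤ (v : V)) = {(v : V)} := by
        ext x
        simp only [Finset.mem_filter, Finset.mem_singleton]
        constructor
        · rintro ⟨hxA, hxle⟩
          rcases lt_or_eq_of_le hxle with hlt | rfl
          · exact absurd ⟨x, Finset.mem_filter.mpr ⟨hxA, hlt⟩⟩ hF
          · rfl
        · rintro rfl; exact ⟨hvA, le_refl _⟩
      rw [heq, Finset.card_singleton]
  next hvS =>
    rw [dif_neg hvS]
    split at h
    next u heq => simp at h
    next heq =>
      split at h
      next hA => simp at h
      next hA =>
        have hKv : (⟨(v : V), hvS⟩ : ↥{x : V | x ∉ S}) ∈ s6K G S S' (v : V) :=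
          s6C_self G S' v.prop
        rw [Finset.not_nonempty_iff_eq_empty.mp hA, Finset.card_empty,
          cnt_skip_none T _ _ heq, if_pos hKv]

lemma s6_depth_parent (T : RootedForest ↥{v : V | v ∉ S}) :
    ∀ v u, s6parent G S S' T v = some u →
      s6depth G S S' T v = s6depth G S S' T u + 1 := by
  intro v u h
  unfold s6parent at h
  unfold s6depth
  split at h
  next hvS =>
    rw [dif_pos hvS]
    split at h
    next hF =>
      have hu : (u : V) =
          ((s6A G S S' (v : V)).filter (fun x => x < (v : V))).max' hF := by
        have := Option.some.inj h; exact (congrArg Subtype.val this).symm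
      have hmF : (u : V) ∈ (s6A G S S' (v : V)).filter (fun x => x < (v : V)) := by
        rw [hu]; exact Finset.max'_mem _ _
      have hmA : (u : V) ∈ s6A G S S' (v : V) := (Finset.mem_filter.mp hmF).1
      have hmlt : (u : V) < (v : V) := (Finset.mem_filter.mp hmF).2
      have hmC : (u : V) ∈ s6C G S' (v : V) := ((s6A_mem G S S').mp hmA).2.2
      have hmS : (u : V) ∈ S := ((s6A_mem G S S').mp hmA).1
      have hle : ∀ x ∈ s6A G S S' (v : V), x < (v : V) → x ≤ (u : V) := by
        intro x hx hxlt
        have hxF : x ∈ (s6A G S S' (v : V)).filter (fun y => y < (v : V)) :=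
          Finset.mem_filter.mpr ⟨hx, hxlt⟩
        rw [hu]; exact Finset.le_max' _ _ hxF
      rw [dif_pos hmS]
      have hAu : s6A G S S' (u : V) = s6A G S S' (v : V) := s6A_congr G S S' hmC
      rw [hAu]
      have e1 : (s6A G S S' (v : V)).filter (fun x => x ≤ (u : V)) =
          (s6A G S S' (v : V)).filter (fun x => x < (v : V)) := by
        apply Finset.filter_congr
        intro x hx
        exact ⟨fun h1 => lt_of_le_of_lt h1 hmlt, fun h1 => hle x hx h1⟩
      have hvA : (v : V) ∈ s6A G S S' (v : V) :=
        (s6A_mem G S S').mpr ⟨hvS, v.prop, s6C_self G S' v.prop⟩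
      have e2 : (s6A G S S' (v : V)).filter (fun x => x ≤ (v : V)) =
          insert (v : V) ((s6A G S S' (v : V)).filter (fun x => x < (v : V))) := by
        ext x
        simp only [Finset.mem_filter, Finset.mem_insert]
        constructor
        · rintro ⟨hxA, hxle⟩
          rcases lt_or_eq_of_le hxle with hlt | rfl
          · exact Or.inr ⟨hxA, hlt⟩
          · exact Or.inl rfl
        · rintro (rfl | ⟨hxA, hxlt⟩)
          · exact ⟨hvA, le_refl _⟩
          · exact ⟨hxA, le_of_lt hxlt⟩
      rw [e2, e1, Finset.card_insert_of_notMem]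
      simp only [Finset.mem_filter]
      rintro ⟨-, hlt⟩
      exact lt_irrefl _ hlt
    next hF => simp at h
  next hvS =>
    rw [dif_neg hvS]
    have hKv : (⟨(v : V), hvS⟩ : ↥{x : V | x ∉ S}) ∈ s6K G S S' (v : V) :=
      s6C_self G S' v.prop
    split at h
    next w heq =>
      have hu : (u : V) = (w : V) := by
        have := Option.some.inj h; exact (congrArg Subtype.val this).symm
      have hwK : (w : V) ∈ s6C G S' (v : V) := skip_mem T _ _ _ heq
      have huC : (u : V) ∈ s6C G S' (v : V) := by rw [hu]; exact hwK
      have hwS : (u : V) ∉ S := by rw [hu]; exact w.prop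
      rw [dif_neg hwS]
      have hAu : s6A G S S' (u : V) = s6A G S S' (v : V) := s6A_congr G S S' huC
      have hKu : s6K G S S' (u : V) = s6K G S S' (v : V) := s6K_congr G S S' huC
      have hcnt := cnt_skip_some T _ _ _ heq
      rw [if_pos hKv] at hcnt
      have hww : (⟨(u : V), hwS⟩ : ↥{x : V | x ∉ S}) = w := Subtype.ext hu
      rw [hAu, hKu, hww, hcnt]
      omega
    next heq =>
      split at h
      next hA =>
        have hu : (u : V) = (s6A G S S' (v : V)).max' hA := by
          have := Option.some.inj h; exact (congrArg Subtype.val this).symm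
        have hmA : (u : V) ∈ s6A G S S' (v : V) := by
          rw [hu]; exact Finset.max'_mem _ _
        have hmS : (u : V) ∈ S := ((s6A_mem G S S').mp hmA).1
        have hmC : (u : V) ∈ s6C G S' (v : V) := ((s6A_mem G S S').mp hmA).2.2
        rw [dif_pos hmS]
        have hAu : s6A G S S' (u : V) = s6A G S S' (v : V) := s6A_congr G S S' hmC
        have h1 : (s6A G S S' (v : V)).filter (fun x => x ≤ (u : V)) =
            s6A G S S' (v : V) := by
          apply Finset.filter_true_of_mem
          intro x hx
          rw [hu]; exact Finset.le_max' _ _ hx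
        rw [hAu, h1, cnt_skip_none T _ _ heq, if_pos hKv]
      next hA => simp at h

/-- The new rooted forest on the vertex set of `G - S'`. -/
def s6F (T : RootedForest ↥{v : V | v ∉ S}) : RootedForest ↥{v : V | v ∉ S'} where
  parent := s6parent G S S' T
  depth := s6depth G S S' T
  depth_root := s6_depth_root G S S' T
  depth_parent := s6_depth_parent G S S' T

lemma s6parent_top (T : RootedForest ↥{v : V | v ∉ S}) (v : ↥{v : V | v ∉ S'})
    (hvS : (v : V) ∈ S)
    (hF : ((s6A G S S' (v : V)).filter (fun x => x < (v : V))).Nonempty)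
    (hpf : ((s6A G S S' (v : V)).filter (fun x => x < (v : V))).max' hF ∈ {v : V | v ∉ S'}) :
    s6parent G S S' T v =
      some ⟨((s6A G S S' (v : V)).filter (fun x => x < (v : V))).max' hF, hpf⟩ := by
  unfold s6parent
  rw [dif_pos hvS, dif_pos hF]

lemma s6parent_skip (T : RootedForest ↥{v : V | v ∉ S}) (v : ↥{v : V | v ∉ S'})
    (hvS : (v : V) ∉ S) (w : ↥{v : V | v ∉ S})
    (heq : T.skipAux (s6K G S S' (v : V)) ⟨(v : V), hvS⟩ = some w)
    (hpf : (w : V) ∈ {v : V | v ∉ S'}) :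
    s6parent G S S' T v = some ⟨(w : V), hpf⟩ := by
  unfold s6parent
  rw [dif_neg hvS]
  split
  next u' heq' =>
    rw [heq'] at heq
    obtain rfl : u' = w := Option.some.inj heq
    rfl
  next heq' => rw [heq'] at heq; simp at heq

lemma s6parent_lowertop (T : RootedForest ↥{v : V | v ∉ S}) (v : ↥{v : V | v ∉ S'})
    (hvS : (v : V) ∉ S)
    (heq : T.skipAux (s6K G S S' (v : V)) ⟨(v : V), hvS⟩ = none)
    (hA : (s6A G S S' (v : V)).Nonempty)
    (hpf : (s6A G S S' (v : V)).max' hA ∈ {v : V | v ∉ S'}) :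
    s6parent G S S' T v = some ⟨(s6A G S S' (v : V)).max' hA, hpf⟩ := by
  unfold s6parent
  rw [dif_neg hvS]
  split
  next u' heq' => rw [heq'] at heq; simp at heq
  next heq' => rw [dif_pos hA]

lemma s6_top_chain (T : RootedForest ↥{v : V | v ∉ S}) :
    ∀ (n : ℕ) (t s : ↥{v : V | v ∉ S'}),
    ((s6A G S S' (t : V)).filter (fun x => x < (t : V))).card = n →
    (t : V) ∈ S → (s : V) ∈ s6A G S S' (t : V) → (s : V) ≤ (t : V) →
    (s6F G S S' T).Ancestor s t := by
  intro n
  induction n using Nat.strong_induction_on with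
  | _ n ih =>
  intro t s hn htS hsA hsle
  rcases eq_or_lt_of_le hsle with heq | hlt
  · have h : s = t := Subtype.ext heq
    subst h
    exact Relation.ReflTransGen.refl
  · have hsF : (s : V) ∈ (s6A G S S' (t : V)).filter (fun x => x < (t : V)) :=
      Finset.mem_filter.mpr ⟨hsA, hlt⟩
    have hF : ((s6A G S S' (t : V)).filter (fun x => x < (t : V))).Nonempty := ⟨_, hsF⟩
    have hpF : ((s6A G S S' (t : V)).filter (fun x => x < (t : V))).max' hF ∈
        (s6A G S S' (t : V)).filter (fun x => x < (t : V)) := Finset.max'_mem _ _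
    have hpA := (Finset.mem_filter.mp hpF).1
    have hplt := (Finset.mem_filter.mp hpF).2
    have hpC := ((s6A_mem G S S').mp hpA).2.2
    have hpS := ((s6A_mem G S S').mp hpA).1
    have hpS' : ((s6A G S S' (t : V)).filter (fun x => x < (t : V))).max' hF ∈
        {v : V | v ∉ S'} := ((s6A_mem G S S').mp hpA).2.1
    have hparent := s6parent_top G S S' T t htS hF hpS'
    refine Relation.ReflTransGen.head hparent ?_
    have hAp : s6A G S S' (((s6A G S S' (t : V)).filter (fun x => x < (t : V))).max' hF) =
        s6A G S S' (t : V) := s6A_congr G S S' hpC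
    have hss : (s6A G S S' (t : V)).filter
          (fun x => x < ((s6A G S S' (t : V)).filter (fun x => x < (t : V))).max' hF) ⊂
        (s6A G S S' (t : V)).filter (fun x => x < (t : V)) := by
      constructor
      · intro x hx
        have := Finset.mem_filter.mp hx
        exact Finset.mem_filter.mpr ⟨this.1, lt_trans this.2 hplt⟩
      · intro hcon
        have := hcon hpF
        exact lt_irrefl _ (Finset.mem_filter.mp this).2
    have hcard : ((s6A G S S' (((s6A G S S' (t : V)).filter (fun x => x < (t : V))).max' hF)).filter
        (fun x => x < ((s6A G S S' (t : V)).filter (fun x => x < (t : V))).max' hF)).card < n := by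
      rw [hAp, ← hn]
      exact Finset.card_lt_card hss
    exact ih _ hcard ⟨_, hpS'⟩ s rfl hpS (by rw [hAp]; exact hsA) (Finset.le_max' _ _ hsF)

lemma s6_lower_top (T : RootedForest ↥{v : V | v ∉ S}) :
    ∀ (n : ℕ) (v : ↥{v : V | v ∉ S'}) (hvS : (v : V) ∉ S) (s : ↥{v : V | v ∉ S'}),
    T.depth ⟨(v : V), hvS⟩ = n → (s : V) ∈ s6A G S S' (v : V) →
    (s6F G S S' T).Ancestor s v := by
  intro n
  induction n using Nat.strong_induction_on with
  | _ n ih =>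
  intro v hvS s hn hsA
  rcases hsk : T.skipAux (s6K G S S' (v : V)) ⟨(v : V), hvS⟩ with _ | w
  · have hA : (s6A G S S' (v : V)).Nonempty := ⟨_, hsA⟩
    have hmA := Finset.max'_mem (s6A G S S' (v : V)) hA
    have hmS := ((s6A_mem G S S').mp hmA).1
    have hmS' : (s6A G S S' (v : V)).max' hA ∈ {v : V | v ∉ S'} :=
      ((s6A_mem G S S').mp hmA).2.1
    have hmC := ((s6A_mem G S S').mp hmA).2.2
    have hparent := s6parent_lowertop G S S' T v hvS hsk hA hmS'
    refine Relation.ReflTransGen.head hparent ?_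
    refine s6_top_chain G S S' T _ ⟨_, hmS'⟩ s rfl hmS ?_ ?_
    · show (s : V) ∈ s6A G S S' ((s6A G S S' (v : V)).max' hA)
      rw [s6A_congr G S S' hmC]; exact hsA
    · exact Finset.le_max' _ _ hsA
  · have hwC : (w : V) ∈ s6C G S' (v : V) := skip_mem T _ _ _ hsk
    have hwS' : (w : V) ∈ {v : V | v ∉ S'} := s6C_notS' G S' hwC
    have hdep := (skip_anc T _ _ _ hsk).2
    have hparent := s6parent_skip G S S' T v hvS w hsk hwS'
    refine Relation.ReflTransGen.head hparent ?_
    refine ih (T.depth w) (by omega) ⟨(w : V), hwS'⟩ w.prop s rfl ?_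
    show (s : V) ∈ s6A G S S' (w : V)
    rw [s6A_congr G S S' hwC]; exact hsA

lemma s6_lower_lower (T : RootedForest ↥{v : V | v ∉ S}) :
    ∀ (n : ℕ) (v u : ↥{x : V | x ∉ S}),
    T.depth v = n → T.Ancestor u v → (u : V) ∈ s6C G S' (v : V) →
    ∀ (pv : (v : V) ∈ {x : V | x ∉ S'}) (pu : (u : V) ∈ {x : V | x ∉ S'}),
    (s6F G S S' T).Ancestor ⟨(u : V), pu⟩ ⟨(v : V), pv⟩ := by
  intro n
  induction n using Nat.strong_induction_on with
  | _ n ih =>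
  intro v u hn hanc hC pv pu
  rcases Relation.ReflTransGen.cases_head hanc with heq | ⟨w, hpw, hrest⟩
  · obtain rfl : v = u := heq
    exact Relation.ReflTransGen.refl
  · by_cases hwC : (w : V) ∈ s6C G S' (v : V)
    · have hwS' : (w : V) ∈ {x : V | x ∉ S'} := s6C_notS' G S' hwC
      have hskip : T.skipAux (s6K G S S' (v : V)) ⟨(v : V), v.prop⟩ = some w := by
        rw [skipAux_parent T _ hpw, if_pos (show w ∈ s6K G S S' (v : V) from hwC)]
      have hparent := s6parent_skip G S S' T ⟨(v : V), pv⟩ v.prop w hskip hwS'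
      refine Relation.ReflTransGen.head hparent ?_
      have hdep : T.depth w < n := by
        have := T.depth_lt hpw; omega
      have hCw : (u : V) ∈ s6C G S' (w : V) := by
        rw [s6C_eq G S' hwC]; exact hC
      exact ih _ hdep w u rfl hrest hCw hwS' pu
    · have huK : u ∈ s6K G S S' (v : V) := hC
      have hwK : w ∉ s6K G S S' (v : V) := hwC
      obtain ⟨u', hsk', hanc'⟩ := skip_reach T (s6K G S S' (v : V)) hrest huK hwK
      have hskv : T.skipAux (s6K G S S' (v : V)) ⟨(v : V), v.prop⟩ = some u' := by
        rw [skipAux_parent T _ hpw, if_neg hwK]; exact hsk'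
      have hu'K : (u' : V) ∈ s6C G S' (v : V) := skip_mem T _ _ _ hskv
      have hu'S' : (u' : V) ∈ {x : V | x ∉ S'} := s6C_notS' G S' hu'K
      have hparent := s6parent_skip G S S' T ⟨(v : V), pv⟩ v.prop u' hskv hu'S'
      have hdep : T.depth u' < n := by
        have hb := (skip_anc T _ _ _ hskv).2
        have hvv : T.depth ⟨(v : V), v.prop⟩ = n := hn
        omega
      refine Relation.ReflTransGen.head hparent ?_
      have hCu' : (u : V) ∈ s6C G S' (u' : V) := by
        rw [s6C_eq G S' hu'K]; exact hC
      exact ih _ hdep u' u rfl hanc' hCu' hu'S' pu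

lemma s6F_isTDD (T : RootedForest ↥{v : V | v ∉ S})
    (hT : IsTDDecomp (G.induce {v : V | v ∉ S}) T) :
    IsTDDecomp (G.induce {v : V | v ∉ S'}) (s6F G S S' T) := by
  intro u v huv
  have hadj : G.Adj (u : V) (v : V) := huv
  have hu' : (u : V) ∈ {v : V | v ∉ S'} := u.prop
  have hv' : (v : V) ∈ {v : V | v ∉ S'} := v.prop
  have hCuv : (v : V) ∈ s6C G S' (u : V) := s6C_adj G S' hadj hu' hv'
  have hCvu : (u : V) ∈ s6C G S' (v : V) := s6C_adj G S' hadj.symm hv' hu'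
  by_cases huS : (u : V) ∈ S <;> by_cases hvS : (v : V) ∈ S
  · rcases le_total (u : V) (v : V) with hle | hle
    · exact Or.inl (s6_top_chain G S S' T _ v u rfl hvS
        ((s6A_mem G S S').mpr ⟨huS, hu', hCvu⟩) hle)
    · exact Or.inr (s6_top_chain G S S' T _ u v rfl huS
        ((s6A_mem G S S').mpr ⟨hvS, hv', hCuv⟩) hle)
  · exact Or.inl (s6_lower_top G S S' T _ v hvS u rfl
      ((s6A_mem G S S').mpr ⟨huS, hu', hCvu⟩))
  · exact Or.inr (s6_lower_top G S S' T _ u huS v rfl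
      ((s6A_mem G S S').mpr ⟨hvS, hv', hCuv⟩))
  · have hadj2 : (G.induce {v : V | v ∉ S}).Adj ⟨(u : V), huS⟩ ⟨(v : V), hvS⟩ := hadj
    rcases hT _ _ hadj2 with h | h
    · exact Or.inl (s6_lower_lower G S S' T _ ⟨(v : V), hvS⟩ ⟨(u : V), huS⟩ rfl h hCvu hv' hu')
    · exact Or.inr (s6_lower_lower G S S' T _ ⟨(u : V), huS⟩ ⟨(v : V), hvS⟩ rfl h hCuv hu' hv')

lemma s6F_height (T : RootedForest ↥{v : V | v ∉ S})
    (hbal : ∀ v : V, v ∉ S' →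
        2 * (Finset.univ.filter (fun u : V => u ∈ S ∧ u ∉ S' ∧
              ∃ w : G.Walk v u, ∀ x ∈ w.support, x ∉ S')).card ≤ S.card) :
    (s6F G S S' T).height ≤ S.card / 2 + T.height := by
  apply Finset.sup_le
  intro v _
  have hA : 2 * (s6A G S S' (v : V)).card ≤ S.card := hbal (v : V) v.prop
  show s6depth G S S' T v ≤ _
  unfold s6depth
  split
  next hvS =>
    have h1 : ((s6A G S S' (v : V)).filter (fun x => x ≤ (v : V))).card ≤
        (s6A G S S' (v : V)).card := Finset.card_filter_le _ _
    omega
  next hvS =>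
    have h2 := cnt_le_depth T (s6K G S S' (v : V)) ⟨(v : V), hvS⟩
    have h3 : T.depth ⟨(v : V), hvS⟩ ≤ T.height :=
      Finset.le_sup (f := T.depth) (Finset.mem_univ _)
    omega

end S6

section TDAux

open RootedForest

variable {U : Type} [Fintype U]

def chainF (U : Type) [Fintype U] : RootedForest U where
  parent v :=
    if _ : (Fintype.equivFin U v : ℕ) = 0 then none
    else some ((Fintype.equivFin U).symm ⟨(Fintype.equivFin U v : ℕ) - 1, by
      have := (Fintype.equivFin U v).isLt; omega⟩)
  depth v := (Fintype.equivFin U v : ℕ) + 1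
  depth_root := by
    intro v h
    split at h
    next h0 => omega
    next h0 => simp at h
  depth_parent := by
    intro v u h
    split at h
    next h0 => simp at h
    next h0 =>
      have h1 := Option.some.inj h
      have h2 : (Fintype.equivFin U u : ℕ) = (Fintype.equivFin U v : ℕ) - 1 := by
        rw [← h1, Equiv.apply_symm_apply]
      omega

lemma chainF_anc (U : Type) [Fintype U] :
    ∀ (k : ℕ) (v : U) (hk : k ≤ (Fintype.equivFin U v : ℕ)),
      (chainF U).Ancestor ((Fintype.equivFin U).symm
        ⟨(Fintype.equivFin U v : ℕ) - k, by have := (Fintype.equivFin U v).isLt; omega⟩) v := by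
  intro k
  induction k with
  | zero =>
    intro v _
    have h1 : (⟨(Fintype.equivFin U v : ℕ) - 0, by
        have := (Fintype.equivFin U v).isLt; omega⟩ : Fin (Fintype.card U)) =
        Fintype.equivFin U v := by
      apply Fin.ext; simp
    rw [h1, Equiv.symm_apply_apply]
    exact Relation.ReflTransGen.refl
  | succ k ihk =>
    intro v hk
    refine Relation.ReflTransGen.tail (ihk v (by omega)) ?_
    show (chainF U).parent _ = _
    unfold chainF
    dsimp only
    simp only [Equiv.apply_symm_apply]
    rw [dif_neg (show ¬((⟨(Fintype.equivFin U v : ℕ) - k, by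
      have := (Fintype.equivFin U v).isLt; omega⟩ : Fin (Fintype.card U)) : ℕ) = 0 by
      simp; omega)]
    simp only [show (Fintype.equivFin U v : ℕ) - k - 1 =
      (Fintype.equivFin U v : ℕ) - (k + 1) from by omega]

lemma chainF_isTDD (G : SimpleGraph U) : IsTDDecomp G (chainF U) := by
  intro u v _
  rcases le_total (Fintype.equivFin U u : ℕ) (Fintype.equivFin U v : ℕ) with hle | hle
  · left
    have h := chainF_anc U ((Fintype.equivFin U v : ℕ) - (Fintype.equivFin U u : ℕ)) v
      (by omega)
    have h1 : (⟨(Fintype.equivFin U v : ℕ) -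
        ((Fintype.equivFin U v : ℕ) - (Fintype.equivFin U u : ℕ)), by
        have := (Fintype.equivFin U v).isLt; omega⟩ : Fin (Fintype.card U)) =
        Fintype.equivFin U u := by
      apply Fin.ext; simp; omega
    rw [h1, Equiv.symm_apply_apply] at h
    exact h
  · right
    have h := chainF_anc U ((Fintype.equivFin U u : ℕ) - (Fintype.equivFin U v : ℕ)) u
      (by omega)
    have h1 : (⟨(Fintype.equivFin U u : ℕ) -
        ((Fintype.equivFin U u : ℕ) - (Fintype.equivFin U v : ℕ)), by
        have := (Fintype.equivFin U u).isLt; omega⟩ : Fin (Fintype.card U)) =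
        Fintype.equivFin U v := by
      apply Fin.ext; simp; omega
    rw [h1, Equiv.symm_apply_apply] at h
    exact h

lemma treedepth_le_height (G : SimpleGraph U) (T : RootedForest U)
    (h : IsTDDecomp G T) : treedepth G ≤ T.height :=
  Nat.sInf_le ⟨T, h, rfl⟩

lemma exists_optimal (G : SimpleGraph U) :
    ∃ T : RootedForest U, IsTDDecomp G T ∧ T.height = treedepth G := by
  have hne : {h | ∃ T : RootedForest U, IsTDDecomp G T ∧ T.height = h}.Nonempty :=
    ⟨(chainF U).height, chainF U, chainF_isTDD G, rfl⟩
  exact Nat.sInf_mem hne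

end TDAux

/-- Let `G` be non-complete, `S` a minimal separator with
`|S| ≥ 2·tw(G) + 1`, and `S'` a vertex set with `|S'| ≤ tw(G) + 1` such that
`G[S ∖ S']` has more than one connected component and every connected component
`C'` of `G ∖ S'` satisfies `|V(C') ∩ S| ≤ |S| / 2`.  Then
`|S'| + td(G ∖ S') ≤ |S| + td(G ∖ S)`. -/
theorem statement6 {V : Type} [Fintype V] (G : SimpleGraph V) (hG : G ≠ ⊤)
    (S S' : Finset V) (hS : IsMinSep G S)
    (hScard : 2 * treewidth G + 1 ≤ S.card)
    (hS'card : S'.card ≤ treewidth G + 1)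
    -- `G[S ∖ S']` has more than one connected component:
    (hsplit : ∃ a b : {v : V // v ∈ S ∧ v ∉ S'},
        ¬ (G.induce {v : V | v ∈ S ∧ v ∉ S'}).Reachable a b)
    -- every connected component of `G ∖ S'` contains at most `|S| / 2` vertices of `S`
    -- (the component of a vertex `v ∉ S'` consists of the vertices joined to `v`
    -- by a walk avoiding `S'`):
    (hbal : ∀ v : V, v ∉ S' →
        2 * (Finset.univ.filter (fun u : V => u ∈ S ∧ u ∉ S' ∧
              ∃ w : G.Walk v u, ∀ x ∈ w.support, x ∉ S')).card ≤ S.card) :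
    S'.card + treedepth (G.induce {v : V | v ∉ S'}) ≤
      S.card + treedepth (G.induce {v : V | v ∉ S}) := by
  letI : LinearOrder V := LinearOrder.lift' (Fintype.equivFin V) (Equiv.injective _)
  obtain ⟨T, hT, hTh⟩ := exists_optimal (G.induce {v : V | v ∉ S})
  have h1 : treedepth (G.induce {v : V | v ∉ S'}) ≤ (s6F G S S' T).height :=
    treedepth_le_height _ _ (s6F_isTDD G S S' T hT)
  have h2 := s6F_height G S S' T hbal
  omega

end
end

section
/- Let n ≥ 1 and k ≥ 1 be integers, let G be the grid graph with vertex set {(i,j) : 1 ≤ i ≤ n, 1 ≤ j ≤ 2^k − 1} (edges between vertices at ℓ1-distance 1), let T be a treedepth decomposition of G, and let d ≥ 1 be an integer such that for every 1 ≤ j ≤ 2^k − 1 there exists some 1 ≤ i ≤ n with (i,j) ∈ top(T,d). Then d ≥ k. -/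
open SimpleGraph

attribute [local instance] Classical.propDecidable

noncomputable section

section Statement7Aux

open Relation

private lemma rf_one_le_depth {V : Type} (T : RootedForest V) (v : V) : 1 ≤ T.depth v := by
  cases h : T.parent v with
  | none => rw [T.depth_root v h]
  | some u => rw [T.depth_parent v u h]; omega

private lemma rf_depth_le {V : Type} (T : RootedForest V) {u v : V} (h : T.Ancestor u v) :
    T.depth u ≤ T.depth v := by
  induction h with
  | refl => exact le_rfl
  | tail h1 h2 ih =>
    rename_i b c
    have := T.depth_parent b c h2
    omega

private lemma rf_depth_lt {V : Type} (T : RootedForest V) {u v : V} (h : T.Ancestor u v) :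
    u ≠ v → T.depth u < T.depth v := by
  rcases Relation.ReflTransGen.cases_tail h with heq | ⟨b, hb, hstep⟩
  · intro hne; exact absurd heq hne
  · intro _
    have e := T.depth_parent b u hstep
    have := rf_depth_le T hb
    omega

private lemma rf_comparable {V : Type} (T : RootedForest V) {x a b : V}
    (h1 : T.Ancestor a x) (h2 : T.Ancestor b x) :
    T.Ancestor a b ∨ T.Ancestor b a := by
  unfold RootedForest.Ancestor at *
  revert h2
  induction h1 using Relation.ReflTransGen.head_induction_on with
  | refl => intro h2; exact Or.inr h2
  | head hstep hrest ih =>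
    rename_i y c
    intro h2
    rcases Relation.ReflTransGen.cases_head h2 with heq | ⟨c', hstep', hrest'⟩
    · subst heq
      exact Or.inl (Relation.ReflTransGen.head hstep hrest)
    · have hcc : c' = c := by rw [hstep] at hstep'; exact (Option.some.inj hstep').symm
      subst hcc
      exact ih hrest'

private lemma rf_step {n m : ℕ} (T : RootedForest (Fin n × Fin m))
    (hT : IsTDDecomp (gridGraph n m) T) {r u v : Fin n × Fin m}
    (hrv : T.Ancestor r v) (hadj : (gridGraph n m).Adj u v)
    (hdep : T.depth r ≤ T.depth u) : T.Ancestor r u := by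
  rcases hT u v hadj with h | h
  · rcases rf_comparable T h hrv with h' | h'
    · by_cases hur : u = r
      · subst hur; exact Relation.ReflTransGen.refl
      · exact absurd (rf_depth_lt T h' hur) (by omega)
    · exact h'
  · exact Relation.ReflTransGen.trans h hrv

private lemma strip_root (n m : ℕ) (hn : 1 ≤ n)
    (T : RootedForest (Fin n × Fin m))
    (hT : IsTDDecomp (gridGraph n m) T)
    (c L : ℕ) (hL : 1 ≤ L) (hcL : c + L ≤ m) :
    ∃ r : Fin n × Fin m, (c ≤ r.2.val ∧ r.2.val < c + L) ∧
      ∀ v : Fin n × Fin m, c ≤ v.2.val → v.2.val < c + L → T.Ancestor r v := by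
  classical
  set S : Finset (Fin n × Fin m) :=
    Finset.univ.filter (fun v => c ≤ v.2.val ∧ v.2.val < c + L) with hS
  have hne : S.Nonempty := ⟨(⟨0, hn⟩, ⟨c, by omega⟩), by
    simp only [hS, Finset.mem_filter, Finset.mem_univ, true_and]
    exact ⟨le_refl c, by omega⟩⟩
  obtain ⟨r, hrS, hmin⟩ := S.exists_min_image T.depth hne
  have hrmem : c ≤ r.2.val ∧ r.2.val < c + L := by
    simpa only [hS, Finset.mem_filter, Finset.mem_univ, true_and] using hrS
  have hminP : ∀ v : Fin n × Fin m, c ≤ v.2.val → v.2.val < c + L →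
      T.depth r ≤ T.depth v := by
    intro v h1 h2
    apply hmin
    simp only [hS, Finset.mem_filter, Finset.mem_univ, true_and]
    exact ⟨h1, h2⟩
  have hstep : ∀ v u : Fin n × Fin m, T.Ancestor r v → (gridGraph n m).Adj u v →
      c ≤ u.2.val → u.2.val < c + L → T.Ancestor r u := by
    intro v u hv hadj h1 h2
    exact rf_step T hT hv hadj (hminP u h1 h2)
  have refl_r : T.Ancestor r r := Relation.ReflTransGen.refl
  -- moving along the column of r
  have up : ∀ t (h : r.1.val + t < n), T.Ancestor r (⟨r.1.val + t, h⟩, r.2) := by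
    intro t
    induction t with
    | zero => intro h; exact refl_r
    | succ t ih =>
      intro h
      have ht : r.1.val + t < n := by omega
      refine hstep (⟨r.1.val + t, ht⟩, r.2) (⟨r.1.val + t + 1, h⟩, r.2) (ih ht) ?_
        hrmem.1 hrmem.2
      show Nat.dist (r.1.val + t + 1) (r.1.val + t) + Nat.dist r.2.val r.2.val = 1
      simp only [Nat.dist]; omega
  have down : ∀ t, t ≤ r.1.val → T.Ancestor r (⟨r.1.val - t, by have := r.1.isLt; omega⟩, r.2) := by
    intro t
    induction t with
    | zero => intro _; exact refl_r
    | succ t ih =>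
      intro h
      refine hstep (⟨r.1.val - t, by omega⟩, r.2) (⟨r.1.val - (t + 1), by omega⟩, r.2)
        (ih (by omega)) ?_ hrmem.1 hrmem.2
      show Nat.dist (r.1.val - (t + 1)) (r.1.val - t) + Nat.dist r.2.val r.2.val = 1
      simp only [Nat.dist]; omega
  have colAll : ∀ i : Fin n, T.Ancestor r (i, r.2) := by
    intro i
    rcases le_total r.1.val i.val with h | h
    · have := up (i.val - r.1.val) (by omega)
      simpa only [show r.1.val + (i.val - r.1.val) = i.val from by omega, Fin.eta] using this
    · have := down (r.1.val - i.val) (by omega)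
      simpa only [show r.1.val - (r.1.val - i.val) = i.val from by omega, Fin.eta] using this
  have rowAll : ∀ (i : Fin n) (j : Fin m), c ≤ j.val → j.val < c + L →
      T.Ancestor r (i, j) := by
    intro i j hj1 hj2
    rcases le_total r.2.val j.val with h | h
    · have upJ : ∀ t (ht : r.2.val + t < c + L),
          T.Ancestor r (i, ⟨r.2.val + t, by omega⟩) := by
        intro t
        induction t with
        | zero => intro _; exact colAll i
        | succ t ih =>
          intro ht
          refine hstep (i, ⟨r.2.val + t, by omega⟩) (i, ⟨r.2.val + t + 1, by omega⟩)
            (ih (by omega)) ?_ (by show c ≤ r.2.val + t + 1; omega)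
            (by show r.2.val + t + 1 < c + L; omega)
          show Nat.dist i.val i.val + Nat.dist (r.2.val + t + 1) (r.2.val + t) = 1
          simp only [Nat.dist]; omega
      have := upJ (j.val - r.2.val) (by omega)
      simpa only [show r.2.val + (j.val - r.2.val) = j.val from by omega, Fin.eta] using this
    · have downJ : ∀ t (ht : c + t ≤ r.2.val),
          T.Ancestor r (i, ⟨r.2.val - t, by have := r.2.isLt; omega⟩) := by
        intro t
        induction t with
        | zero => intro _; exact colAll i
        | succ t ih =>
          intro ht
          refine hstep (i, ⟨r.2.val - t, by omega⟩) (i, ⟨r.2.val - (t + 1), by omega⟩)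
            (ih (by omega)) ?_ (by show c ≤ r.2.val - (t + 1); omega)
            (by show r.2.val - (t + 1) < c + L; omega)
          show Nat.dist i.val i.val + Nat.dist (r.2.val - (t + 1)) (r.2.val - t) = 1
          simp only [Nat.dist]; omega
      have := downJ (r.2.val - j.val) (by omega)
      simpa only [show r.2.val - (r.2.val - j.val) = j.val from by omega, Fin.eta] using this
  exact ⟨r, hrmem, fun v h1 h2 => rowAll v.1 v.2 h1 h2⟩

private lemma statement7_aux (n m : ℕ) (hn : 1 ≤ n)
    (T : RootedForest (Fin n × Fin m))
    (hT : IsTDDecomp (gridGraph n m) T)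
    (d : ℕ) (hcover : ∀ j : Fin m, ∃ i : Fin n, T.depth (i, j) ≤ d) :
    ∀ k, 1 ≤ k → ∀ c, c + (2 ^ k - 1) ≤ m → ∀ r : Fin n × Fin m,
      (∀ v : Fin n × Fin m, c ≤ v.2.val → v.2.val < c + (2 ^ k - 1) → T.Ancestor r v) →
      T.depth r + (k - 1) ≤ d := by
  intro k
  induction k with
  | zero => intro h; omega
  | succ k ih =>
    intro _ c hc r hr
    by_cases hk0 : k = 0
    · subst hk0
      have hcm : c < m := by norm_num at hc; omega
      obtain ⟨i, hi⟩ := hcover ⟨c, hcm⟩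
      have h2 := rf_depth_le T (hr (i, ⟨c, hcm⟩) (le_refl c) (by norm_num))
      omega
    · have hk1 : 1 ≤ k := by omega
      have h2k : 2 ≤ 2 ^ k := by
        calc 2 = 2 ^ 1 := (pow_one 2).symm
        _ ≤ 2 ^ k := Nat.pow_le_pow_right (by omega) hk1
      have hpow : 2 ^ (k + 1) = 2 * 2 ^ k := by rw [pow_succ]; ring
      have hexc : ∃ c', c ≤ c' ∧ c' + (2 ^ k - 1) ≤ c + (2 ^ (k + 1) - 1) ∧
          c' + (2 ^ k - 1) ≤ m ∧
          (r.2.val < c' ∨ c' + (2 ^ k - 1) ≤ r.2.val) := by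
        rcases le_or_gt (c + 2 ^ k - 1) r.2.val with hcase | hcase
        · exact ⟨c, le_rfl, by omega, by omega, Or.inr (by omega)⟩
        · exact ⟨c + 2 ^ k, by omega, by omega, by omega, Or.inl (by omega)⟩
      obtain ⟨c', hc1, hc2, hc3, hc4⟩ := hexc
      obtain ⟨r', hr'mem, hr'anc⟩ := strip_root n m hn T hT c' (2 ^ k - 1)
        (by omega) hc3
      have hrr' : T.Ancestor r r' := hr r' (by omega) (by omega)
      have hner : r ≠ r' := by
        intro he
        have hm : c' ≤ r.2.val ∧ r.2.val < c' + (2 ^ k - 1) := by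
          rw [he]; exact hr'mem
        omega
      have hlt : T.depth r < T.depth r' := rf_depth_lt T hrr' hner
      have := ih hk1 c' hc3 r' hr'anc
      omega

end Statement7Aux

/-- For the grid `P_{2^k - 1} × P_n` (with `n, k ≥ 1`), if `T` is a
treedepth decomposition of the grid and `d ≥ 1` is such that every column `j`
contains a vertex of `top(T, d)`, then `d ≥ k`. -/
theorem statement7 (n k : ℕ) (hn : 1 ≤ n) (hk : 1 ≤ k)
    (T : RootedForest (Fin n × Fin (2 ^ k - 1)))
    (hT : IsTDDecomp (gridGraph n (2 ^ k - 1)) T)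
    (d : ℕ) (hd : 1 ≤ d)
    (hcover : ∀ j : Fin (2 ^ k - 1), ∃ i : Fin n, (i, j) ∈ T.top d) :
    k ≤ d := by
  have hm : 1 ≤ 2 ^ k - 1 := by
    have : 2 ≤ 2 ^ k := by
      calc 2 = 2 ^ 1 := (pow_one 2).symm
      _ ≤ 2 ^ k := Nat.pow_le_pow_right (by omega) hk
    omega
  obtain ⟨r, hrmem, hranc⟩ := strip_root n (2 ^ k - 1) hn T hT 0 (2 ^ k - 1) hm (by omega)
  have hcover' : ∀ j : Fin (2 ^ k - 1), ∃ i : Fin n, T.depth (i, j) ≤ d :=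
    fun j => (hcover j).imp fun i h => h
  have := statement7_aux n (2 ^ k - 1) hn T hT d hcover' k hk 0 (by omega) r
    (fun v h1 h2 => hranc v h1 h2)
  have := rf_one_le_depth T r
  omega

end
end

section
/- Let n, m, k be positive integers with k ≥ 2n + 2·td(P_m × P_n). Suppose T is an optimal treedepth decomposition of the double broom D_{n,m,k} and d ≥ 1 is an integer such that there exists some 1 ≤ j ≤ m satisfying: (1) top(T,d) ∩ {(i,j) : 1 ≤ i ≤ n} = ∅; (2) for every 1 ≤ i ≤ n, the set V_i consisting of {(i,j') : j < j' ≤ m} together with the vertices of the path on 2^k − 1 vertices attached to (i,m) contains at least one vertex of top(T,d); and (3) for every 1 ≤ i ≤ n, the set U_i consisting of {(i,j') : 1 ≤ j' < j} together with the vertices of the path on 2^k − 1 vertices attached to (i,1) contains at least one vertex of top(T,d). Then d ≥ 2n. -/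
open SimpleGraph

attribute [local instance] Classical.propDecidable

noncomputable section

namespace RootedForest

variable {V : Type} (T : RootedForest V)

lemma one_le_depth (v : V) : 1 ≤ T.depth v := by
  cases h : T.parent v with
  | none => exact (T.depth_root v h).ge
  | some u => rw [T.depth_parent v u h]; omega

lemma eq_or_depth_lt {a b : V}
    (h : Relation.ReflTransGen (fun x y => T.parent x = some y) a b) :
    b = a ∨ T.depth b < T.depth a := by
  induction h with
  | refl => exact Or.inl rfl
  | @tail c u hac hcu ih =>
      have hdc : T.depth c = T.depth u + 1 := T.depth_parent c u hcu
      rcases ih with rfl | hlt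
      · right; omega
      · right; omega

lemma depth_le_of_anc {u v : V} (h : T.Ancestor u v) : T.depth u ≤ T.depth v := by
  rcases T.eq_or_depth_lt h with rfl | hlt
  · exact le_rfl
  · exact hlt.le

lemma anc_total {a b v : V} (h1 : T.Ancestor a v) (h2 : T.Ancestor b v) :
    T.Ancestor a b ∨ T.Ancestor b a := by
  unfold Ancestor at *
  induction h1 using Relation.ReflTransGen.head_induction_on with
  | refl => exact Or.inr h2
  | @head x c hxc hca ih =>
      rcases Relation.ReflTransGen.cases_head h2 with rfl | ⟨c', hxc', hc'b⟩
      · exact Or.inl (Relation.ReflTransGen.head hxc hca)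
      · cases (Option.some_injective _ (hxc.symm.trans hxc')); exact ih hc'b

lemma anc_of_le {a b v : V} (h1 : T.Ancestor a v) (h2 : T.Ancestor b v)
    (hle : T.depth a ≤ T.depth b) : T.Ancestor a b := by
  rcases T.anc_total h1 h2 with h | h
  · exact h
  · rcases T.eq_or_depth_lt h with rfl | hlt
    · exact Relation.ReflTransGen.refl
    · omega

lemma step_anc {G : SimpleGraph V} (hT : IsTDDecomp G T) {a w w' : V}
    (h1 : T.Ancestor a w) (hadj : G.Adj w w') (hle : T.depth a ≤ T.depth w') :
    T.Ancestor a w' := by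
  rcases hT w w' hadj with h | h
  · exact Relation.ReflTransGen.trans h h1
  · exact T.anc_of_le h1 h hle

lemma exists_min_anc {G : SimpleGraph V} (hT : IsTDDecomp G T)
    (f : ℕ → V) (len : ℕ) (hadj : ∀ s, s < len → G.Adj (f s) (f (s+1))) :
    ∃ s ≤ len, (∀ t ≤ len, T.depth (f s) ≤ T.depth (f t)) ∧
      ∀ t ≤ len, T.Ancestor (f s) (f t) := by
  obtain ⟨s, hs, hmin⟩ := (Finset.range (len+1)).exists_min_image
    (fun t => T.depth (f t)) ⟨0, by simp⟩
  rw [Finset.mem_range] at hs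
  have hmin' : ∀ t ≤ len, T.depth (f s) ≤ T.depth (f t) := fun t ht =>
    hmin t (Finset.mem_range.mpr (by omega))
  have fwd : ∀ r, s + r ≤ len → T.Ancestor (f s) (f (s + r)) := by
    intro r
    induction r with
    | zero => intro _; exact Relation.ReflTransGen.refl
    | succ r ih =>
        intro hr
        have h1 := ih (by omega)
        have h2 := hadj (s+r) (by omega)
        have h3 := T.step_anc hT h1 h2 (hmin' (s+r+1) (by omega))
        exact h3
  have bwd : ∀ r, r ≤ s → T.Ancestor (f s) (f (s - r)) := by
    intro r
    induction r with
    | zero => intro _; exact Relation.ReflTransGen.refl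
    | succ r ih =>
        intro hr
        have h1 := ih (by omega)
        have h2 := hadj (s - (r+1)) (by omega)
        have h2' : G.Adj (f (s - r)) (f (s - (r+1))) := by
          have he : s - (r+1) + 1 = s - r := by omega
          rw [he] at h2; exact h2.symm
        exact T.step_anc hT h1 h2' (hmin' (s-(r+1)) (by omega))
  refine ⟨s, by omega, hmin', fun t ht => ?_⟩
  rcases le_or_gt s t with h | h
  · have hh := fwd (t - s) (by omega)
    rwa [show s + (t - s) = t by omega] at hh
  · have hh := bwd (s - t) (by omega)
    rwa [show s - (s - t) = t by omega] at hh

end RootedForest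
section Adj

variable {n m k : ℕ}

lemma adj_horiz (i : Fin n) {a b : Fin m} (h : a.val + 1 = b.val) :
    (dbroom n m k).Adj (Sum.inl (i,a)) (Sum.inl (i,b)) := by
  rw [dbroom, SimpleGraph.fromRel_adj]
  refine ⟨?_, Or.inl ?_⟩
  · intro he
    rw [Sum.inl.injEq, Prod.mk.injEq] at he
    have := congrArg Fin.val he.2
    omega
  · show Nat.dist i.val i.val + Nat.dist a.val b.val = 1
    simp [Nat.dist]
    omega

lemma adj_vert {a b : Fin n} (j : Fin m) (h : a.val + 1 = b.val) :
    (dbroom n m k).Adj (Sum.inl (a,j)) (Sum.inl (b,j)) := by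
  rw [dbroom, SimpleGraph.fromRel_adj]
  refine ⟨?_, Or.inl ?_⟩
  · intro he
    rw [Sum.inl.injEq, Prod.mk.injEq] at he
    have := congrArg Fin.val he.1
    omega
  · show Nat.dist a.val b.val + Nat.dist j.val j.val = 1
    simp [Nat.dist]
    omega

lemma adj_brL (i : Fin n) {a b : Fin (2^k-1)} (h : a.val + 1 = b.val) :
    (dbroom n m k).Adj (Sum.inr (Sum.inl (i,a))) (Sum.inr (Sum.inl (i,b))) := by
  rw [dbroom, SimpleGraph.fromRel_adj]
  refine ⟨?_, Or.inl ?_⟩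
  · intro he
    rw [Sum.inr.injEq, Sum.inl.injEq, Prod.mk.injEq] at he
    have := congrArg Fin.val he.2
    omega
  · exact ⟨rfl, h⟩

lemma adj_brR (i : Fin n) {a b : Fin (2^k-1)} (h : a.val + 1 = b.val) :
    (dbroom n m k).Adj (Sum.inr (Sum.inr (i,a))) (Sum.inr (Sum.inr (i,b))) := by
  rw [dbroom, SimpleGraph.fromRel_adj]
  refine ⟨?_, Or.inl ?_⟩
  · intro he
    rw [Sum.inr.injEq, Sum.inr.injEq, Prod.mk.injEq] at he
    have := congrArg Fin.val he.2
    omega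
  · exact ⟨rfl, h⟩

lemma adj_attachL (i : Fin n) {c : Fin m} {t : Fin (2^k-1)} (hc : c.val = 0)
    (ht : t.val = 0) :
    (dbroom n m k).Adj (Sum.inl (i,c)) (Sum.inr (Sum.inl (i,t))) := by
  rw [dbroom, SimpleGraph.fromRel_adj]
  exact ⟨by simp, Or.inl ⟨rfl, hc, ht⟩⟩

lemma adj_attachR (i : Fin n) {c : Fin m} {t : Fin (2^k-1)} (hc : c.val = m - 1)
    (ht : t.val = 0) :
    (dbroom n m k).Adj (Sum.inl (i,c)) (Sum.inr (Sum.inr (i,t))) := by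
  rw [dbroom, SimpleGraph.fromRel_adj]
  exact ⟨by simp, Or.inl ⟨rfl, hc, ht⟩⟩

end Adj
section Reach

variable {n m k : ℕ}

/-- Vertices strictly on the left side of column `j` in row `i`. -/
def LeftV (j : Fin m) (i : Fin n) (a : DBroomV n m k) : Prop :=
  (∃ j' : Fin m, j'.val < j.val ∧ a = Sum.inl (i, j')) ∨
  ∃ t : Fin (2^k-1), a = Sum.inr (Sum.inl (i, t))

/-- Vertices strictly on the right side of column `j` in row `i`. -/
def RightV (j : Fin m) (i : Fin n) (a : DBroomV n m k) : Prop :=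
  (∃ j' : Fin m, j.val < j'.val ∧ a = Sum.inl (i, j')) ∨
  ∃ t : Fin (2^k-1), a = Sum.inr (Sum.inr (i, t))


lemma veq_inl (i : Fin n) {x y : Fin m} (h : x.val = y.val) :
    (Sum.inl (i,x) : DBroomV n m k) = Sum.inl (i,y) := by
  rw [Fin.val_injective h]

lemma veq_inrl (i : Fin n) {x y : Fin (2^k-1)} (h : x.val = y.val) :
    (Sum.inr (Sum.inl (i,x)) : DBroomV n m k) = Sum.inr (Sum.inl (i,y)) := by
  rw [Fin.val_injective h]

lemma veq_inrr (i : Fin n) {x y : Fin (2^k-1)} (h : x.val = y.val) :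
    (Sum.inr (Sum.inr (i,x)) : DBroomV n m k) = Sum.inr (Sum.inr (i,y)) := by
  rw [Fin.val_injective h]

lemma veq_row {j : Fin m} {x y : Fin n} (h : x.val = y.val) :
    (Sum.inl (x,j) : DBroomV n m k) = Sum.inl (y,j) := by
  rw [Fin.val_injective h]

lemma LeftV_inj {j : Fin m} {i i' : Fin n} {a : DBroomV n m k}
    (h : LeftV j i a) (h' : LeftV j i' a) : i = i' := by
  rcases h with ⟨x, _, rfl⟩ | ⟨x, rfl⟩ <;>
    rcases h' with ⟨y, _, he⟩ | ⟨y, he⟩ <;> simp_all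

lemma RightV_inj {j : Fin m} {i i' : Fin n} {a : DBroomV n m k}
    (h : RightV j i a) (h' : RightV j i' a) : i = i' := by
  rcases h with ⟨x, _, rfl⟩ | ⟨x, rfl⟩ <;>
    rcases h' with ⟨y, _, he⟩ | ⟨y, he⟩ <;> simp_all

lemma LeftV_not_RightV {j : Fin m} {i i' : Fin n} {a : DBroomV n m k}
    (h : LeftV j i a) (h' : RightV j i' a) : False := by
  rcases h with ⟨x, hx, rfl⟩ | ⟨x, rfl⟩ <;>
    rcases h' with ⟨y, hy, he⟩ | ⟨y, he⟩ <;> simp_all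
  omega

lemma left_reach (hm : 0 < m) (T : RootedForest (DBroomV n m k))
    (hT : IsTDDecomp (dbroom n m k) T) (j : Fin m) (i : Fin n)
    {u : DBroomV n m k} (hu : LeftV j i u) :
    ∃ a : DBroomV n m k, T.Ancestor a (Sum.inl (i,j)) ∧ T.depth a ≤ T.depth u ∧
      (LeftV j i a ∨ a = Sum.inl (i,j)) := by
  have hjm := j.isLt
  rcases hu with ⟨j', hj', rfl⟩ | ⟨t, rfl⟩
  · -- grid vertex on the left: walk from (i,j) leftwards to (i,j')
    have hb : ∀ s : ℕ, j.val - s < m := fun s => by omega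
    set f : ℕ → DBroomV n m k := fun s => Sum.inl (i, ⟨j.val - s, hb s⟩) with hf
    have hadj : ∀ s, s < j.val - j'.val → (dbroom n m k).Adj (f s) (f (s+1)) := by
      intro s hs
      rw [hf]
      exact (adj_horiz i (a := ⟨j.val - (s+1), hb _⟩) (b := ⟨j.val - s, hb _⟩)
        (by (try simp); all_goals omega)).symm
    obtain ⟨s, hslen, hmin, hanc⟩ := T.exists_min_anc hT f (j.val - j'.val) hadj
    have hf0 : f 0 = Sum.inl (i, j) := by
      rw [hf]; simp
    have hflen : f (j.val - j'.val) = Sum.inl (i, j') := by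
      rw [hf]
      exact veq_inl i (by (try simp); all_goals omega)
    refine ⟨f s, ?_, ?_, ?_⟩
    · have := hanc 0 (Nat.zero_le _); rwa [hf0] at this
    · have := hmin (j.val - j'.val) le_rfl; rwa [hflen] at this
    · rw [hf]
      rcases Nat.eq_zero_or_pos s with rfl | hs
      · exact Or.inr (by simp)
      · exact Or.inl (Or.inl ⟨⟨j.val - s, hb s⟩, by (try simp); all_goals omega, rfl⟩)
  · -- broom vertex on the left: walk from (i,j) to (i,0) then up the broom
    have hb : ∀ s : ℕ, j.val - s < m := fun s => by omega
    have hb2 : ∀ s : ℕ, min (s - (j.val+1)) t.val < 2^k - 1 :=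
      fun s => Nat.lt_of_le_of_lt (Nat.min_le_right _ _) t.isLt
    set f : ℕ → DBroomV n m k := fun s =>
      if s ≤ j.val then Sum.inl (i, ⟨j.val - s, hb s⟩)
      else Sum.inr (Sum.inl (i, ⟨min (s - (j.val+1)) t.val, hb2 s⟩)) with hf
    have hfle : ∀ s, s ≤ j.val → f s = Sum.inl (i, ⟨j.val - s, hb s⟩) := by
      intro s hs; rw [hf]; simp only; rw [if_pos hs]
    have hfgt : ∀ s, ¬ (s ≤ j.val) →
        f s = Sum.inr (Sum.inl (i, ⟨min (s - (j.val+1)) t.val, hb2 s⟩)) := by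
      intro s hs; rw [hf]; simp only; rw [if_neg hs]
    have hadj : ∀ s, s < j.val + 1 + t.val → (dbroom n m k).Adj (f s) (f (s+1)) := by
      intro s hs
      rcases Nat.lt_trichotomy s j.val with h1 | h1 | h1
      · rw [hfle s (by omega), hfle (s+1) (by omega)]
        exact (adj_horiz i (a := ⟨j.val - (s+1), hb _⟩) (b := ⟨j.val - s, hb _⟩)
          (by (try simp); all_goals omega)).symm
      · rw [hfle s (by omega), hfgt (s+1) (by omega)]
        exact adj_attachL i (by (try simp); all_goals omega) (by (try simp); all_goals omega)
      · rw [hfgt s (by omega), hfgt (s+1) (by omega)]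
        exact adj_brL i (by (try simp); all_goals omega)
    obtain ⟨s, hslen, hmin, hanc⟩ := T.exists_min_anc hT f (j.val + 1 + t.val) hadj
    have hf0 : f 0 = Sum.inl (i, j) := by
      rw [hfle 0 (Nat.zero_le _)]; simp
    have hflen : f (j.val + 1 + t.val) = Sum.inr (Sum.inl (i, t)) := by
      rw [hfgt _ (by omega)]
      exact veq_inrl i (by (try simp); all_goals omega)
    refine ⟨f s, ?_, ?_, ?_⟩
    · have := hanc 0 (Nat.zero_le _); rwa [hf0] at this
    · have := hmin (j.val + 1 + t.val) le_rfl; rwa [hflen] at this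
    · by_cases hs : s ≤ j.val
      · rw [hfle s hs]
        rcases Nat.eq_zero_or_pos s with rfl | hs'
        · exact Or.inr (by simp)
        · exact Or.inl (Or.inl ⟨⟨j.val - s, hb s⟩, by (try simp); all_goals omega, rfl⟩)
      · rw [hfgt s hs]
        exact Or.inl (Or.inr ⟨_, rfl⟩)

lemma right_reach (hm : 0 < m) (T : RootedForest (DBroomV n m k))
    (hT : IsTDDecomp (dbroom n m k) T) (j : Fin m) (i : Fin n)
    {u : DBroomV n m k} (hu : RightV j i u) :
    ∃ a : DBroomV n m k, T.Ancestor a (Sum.inl (i,j)) ∧ T.depth a ≤ T.depth u ∧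
      (RightV j i a ∨ a = Sum.inl (i,j)) := by
  have hjm := j.isLt
  rcases hu with ⟨j', hj', rfl⟩ | ⟨t, rfl⟩
  · -- grid vertex on the right: walk from (i,j) rightwards to (i,j')
    have hjm' := j'.isLt
    have hb : ∀ s : ℕ, min (j.val + s) (m-1) < m := fun s => by omega
    set f : ℕ → DBroomV n m k := fun s => Sum.inl (i, ⟨min (j.val + s) (m-1), hb s⟩)
      with hf
    have hadj : ∀ s, s < j'.val - j.val → (dbroom n m k).Adj (f s) (f (s+1)) := by
      intro s hs
      rw [hf]
      exact adj_horiz i (a := ⟨min (j.val + s) (m-1), hb _⟩)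
        (b := ⟨min (j.val + (s+1)) (m-1), hb _⟩) (by (try simp); all_goals omega)
    obtain ⟨s, hslen, hmin, hanc⟩ := T.exists_min_anc hT f (j'.val - j.val) hadj
    have hf0 : f 0 = Sum.inl (i, j) := by
      rw [hf]
      exact veq_inl i (by (try simp); all_goals omega)
    have hflen : f (j'.val - j.val) = Sum.inl (i, j') := by
      rw [hf]
      exact veq_inl i (by (try simp); all_goals omega)
    refine ⟨f s, ?_, ?_, ?_⟩
    · have := hanc 0 (Nat.zero_le _); rwa [hf0] at this
    · have := hmin (j'.val - j.val) le_rfl; rwa [hflen] at this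
    · rw [hf]
      rcases Nat.eq_zero_or_pos s with rfl | hs
      · exact Or.inr (veq_inl i (by (try simp); all_goals omega))
      · exact Or.inl (Or.inl ⟨⟨min (j.val + s) (m-1), hb s⟩, by (try simp); all_goals omega, rfl⟩)
  · -- broom vertex on the right: walk from (i,j) to (i,m-1) then up the broom
    have hb : ∀ s : ℕ, min (j.val + s) (m-1) < m := fun s => by omega
    set q := m - 1 - j.val with hq
    have hb2 : ∀ s : ℕ, min (s - (q+1)) t.val < 2^k - 1 :=
      fun s => Nat.lt_of_le_of_lt (Nat.min_le_right _ _) t.isLt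
    set f : ℕ → DBroomV n m k := fun s =>
      if s ≤ q then Sum.inl (i, ⟨min (j.val + s) (m-1), hb s⟩)
      else Sum.inr (Sum.inr (i, ⟨min (s - (q+1)) t.val, hb2 s⟩)) with hf
    have hfle : ∀ s, s ≤ q → f s = Sum.inl (i, ⟨min (j.val + s) (m-1), hb s⟩) := by
      intro s hs; rw [hf]; simp only; rw [if_pos hs]
    have hfgt : ∀ s, ¬ (s ≤ q) →
        f s = Sum.inr (Sum.inr (i, ⟨min (s - (q+1)) t.val, hb2 s⟩)) := by
      intro s hs; rw [hf]; simp only; rw [if_neg hs]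
    have hadj : ∀ s, s < q + 1 + t.val → (dbroom n m k).Adj (f s) (f (s+1)) := by
      intro s hs
      rcases Nat.lt_trichotomy s q with h1 | h1 | h1
      · rw [hfle s (by omega), hfle (s+1) (by omega)]
        exact adj_horiz i (by (try simp); all_goals omega)
      · rw [hfle s (by omega), hfgt (s+1) (by omega)]
        exact adj_attachR i (by (try simp); all_goals omega) (by (try simp); all_goals omega)
      · rw [hfgt s (by omega), hfgt (s+1) (by omega)]
        exact adj_brR i (by (try simp); all_goals omega)
    obtain ⟨s, hslen, hmin, hanc⟩ := T.exists_min_anc hT f (q + 1 + t.val) hadj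
    have hf0 : f 0 = Sum.inl (i, j) := by
      rw [hfle 0 (Nat.zero_le _)]
      exact veq_inl i (by (try simp); all_goals omega)
    have hflen : f (q + 1 + t.val) = Sum.inr (Sum.inr (i, t)) := by
      rw [hfgt _ (by omega)]
      exact veq_inrr i (by (try simp); all_goals omega)
    refine ⟨f s, ?_, ?_, ?_⟩
    · have := hanc 0 (Nat.zero_le _); rwa [hf0] at this
    · have := hmin (q + 1 + t.val) le_rfl; rwa [hflen] at this
    · by_cases hs : s ≤ q
      · rw [hfle s hs]
        rcases Nat.eq_zero_or_pos s with rfl | hs'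
        · exact Or.inr (veq_inl i (by (try simp); all_goals omega))
        · exact Or.inl (Or.inl ⟨⟨min (j.val + s) (m-1), hb s⟩, by (try simp); all_goals omega, rfl⟩)
      · rw [hfgt s hs]
        exact Or.inl (Or.inr ⟨_, rfl⟩)

end Reach
/-- Let `k ≥ 2n + 2·td(P_m × P_n)`, let `T` be an optimal treedepth
decomposition of the double broom `D_{n,m,k}`, and let `d ≥ 1` be such that for
some column `j`: (1) column `j` is disjoint from `top(T,d)`; (2) for every row
`i`, the set `V_i` (grid vertices `(i,j')` with `j' > j` together with the path
attached to `(i,m)`) meets `top(T,d)`; and (3) for every row `i`, the set `U_i`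
(grid vertices `(i,j')` with `j' < j` together with the path attached to
`(i,1)`) meets `top(T,d)`.  Then `d ≥ 2n`. -/
theorem statement9 (n m k : ℕ) (hn : 0 < n) (hm : 0 < m) (hk0 : 0 < k)
    (hk : 2 * n + 2 * treedepth (gridGraph n m) ≤ k)
    (T : RootedForest (DBroomV n m k)) (hT : IsTDDecomp (dbroom n m k) T)
    (hopt : T.height = treedepth (dbroom n m k))
    (d : ℕ) (hd : 1 ≤ d)
    (h : ∃ j : Fin m,
      (∀ i : Fin n, (Sum.inl (i, j) : DBroomV n m k) ∉ T.top d) ∧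
      (∀ i : Fin n,
        (∃ j' : Fin m, j.val < j'.val ∧ (Sum.inl (i, j') : DBroomV n m k) ∈ T.top d) ∨
        (∃ t : Fin (2 ^ k - 1), (Sum.inr (Sum.inr (i, t)) : DBroomV n m k) ∈ T.top d)) ∧
      (∀ i : Fin n,
        (∃ j' : Fin m, j'.val < j.val ∧ (Sum.inl (i, j') : DBroomV n m k) ∈ T.top d) ∨
        (∃ t : Fin (2 ^ k - 1), (Sum.inr (Sum.inl (i, t)) : DBroomV n m k) ∈ T.top d))) :
    2 * n ≤ d := by
  obtain ⟨j, h1, h2, h3⟩ := h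
  have h1' : ∀ i : Fin n, d < T.depth (Sum.inl (i, j) : DBroomV n m k) := by
    intro i
    have := h1 i
    simpa [RootedForest.top, not_le] using this
  -- the minimum-depth vertex z of column j is below every column vertex
  have hb : ∀ s : ℕ, min s (n-1) < n := fun s => by omega
  set g : ℕ → DBroomV n m k := fun s => Sum.inl (⟨min s (n-1), hb s⟩, j) with hg
  have hadj : ∀ s, s < n - 1 → (dbroom n m k).Adj (g s) (g (s+1)) := by
    intro s hs
    rw [hg]
    exact adj_vert j (a := ⟨min s (n-1), hb s⟩) (b := ⟨min (s+1) (n-1), hb _⟩)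
      (by (try simp); all_goals omega)
  obtain ⟨s0, hs0, hgmin, hganc⟩ := T.exists_min_anc hT g (n-1) hadj
  set z := g s0 with hz
  have hzanc : ∀ i : Fin n, T.Ancestor z (Sum.inl (i, j)) := by
    intro i
    have hh := hganc i.val (by have := i.isLt; omega)
    have e : g i.val = Sum.inl (i, j) := by
      rw [hg]
      exact veq_row (by have := i.isLt; (try simp); all_goals omega)
    rwa [e] at hh
  have hdz : d < T.depth z := by
    rw [hz, hg]
    exact h1' ⟨min s0 (n-1), hb s0⟩
  -- choose for each row a shallow vertex on the left and on the right
  have hLex : ∀ i : Fin n, ∃ a, T.Ancestor a (Sum.inl (i,j) : DBroomV n m k) ∧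
      T.depth a ≤ d ∧ LeftV j i a := by
    intro i
    have hex : ∃ u : DBroomV n m k, LeftV j i u ∧ T.depth u ≤ d := by
      rcases h3 i with ⟨j', hj', htop⟩ | ⟨t, htop⟩
      · exact ⟨_, Or.inl ⟨j', hj', rfl⟩, htop⟩
      · exact ⟨_, Or.inr ⟨t, rfl⟩, htop⟩
    obtain ⟨u, hu, hud⟩ := hex
    obtain ⟨a, ha1, ha2, ha3⟩ := left_reach hm T hT j i hu
    refine ⟨a, ha1, le_trans ha2 hud, ?_⟩
    rcases ha3 with hh | rfl
    · exact hh
    · exact absurd (le_trans ha2 hud) (by have := h1' i; omega)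
  have hRex : ∀ i : Fin n, ∃ a, T.Ancestor a (Sum.inl (i,j) : DBroomV n m k) ∧
      T.depth a ≤ d ∧ RightV j i a := by
    intro i
    have hex : ∃ u : DBroomV n m k, RightV j i u ∧ T.depth u ≤ d := by
      rcases h2 i with ⟨j', hj', htop⟩ | ⟨t, htop⟩
      · exact ⟨_, Or.inl ⟨j', hj', rfl⟩, htop⟩
      · exact ⟨_, Or.inr ⟨t, rfl⟩, htop⟩
    obtain ⟨u, hu, hud⟩ := hex
    obtain ⟨a, ha1, ha2, ha3⟩ := right_reach hm T hT j i hu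
    refine ⟨a, ha1, le_trans ha2 hud, ?_⟩
    rcases ha3 with hh | rfl
    · exact hh
    · exact absurd (le_trans ha2 hud) (by have := h1' i; omega)
  choose uL hL1 hL2 hL3 using hLex
  choose uR hR1 hR2 hR3 using hRex
  set F : Fin n × Bool → DBroomV n m k := fun p => if p.2 then uR p.1 else uL p.1
    with hF
  have hFd : ∀ p, T.depth (F p) ≤ d := by
    rintro ⟨i, b⟩
    cases b
    · simpa [hF] using hL2 i
    · simpa [hF] using hR2 i
  have hFanc : ∀ p, T.Ancestor (F p) z := by
    rintro ⟨i, b⟩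
    cases b
    · refine T.anc_of_le ?_ (hzanc i) (by have := hL2 i; simp [hF]; omega)
      simpa [hF] using hL1 i
    · refine T.anc_of_le ?_ (hzanc i) (by have := hR2 i; simp [hF]; omega)
      simpa [hF] using hR1 i
  have hFinj : Function.Injective F := by
    rintro ⟨ip, bp⟩ ⟨iq, bq⟩ hpq
    cases bp <;> cases bq <;> simp only [hF, if_true, if_false, Bool.false_eq_true,
      if_neg, ite_true, ite_false, Bool.cond_self] at hpq <;>
      simp only [Prod.mk.injEq]
    · exact ⟨LeftV_inj (hL3 ip) (hpq ▸ hL3 iq), trivial⟩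
    · exact (LeftV_not_RightV (hL3 ip) (hpq ▸ hR3 iq)).elim
    · exact (LeftV_not_RightV (hL3 iq) (hpq ▸ hR3 ip)).elim
    · exact ⟨RightV_inj (hR3 ip) (hpq ▸ hR3 iq), trivial⟩
  have hdinj : Function.Injective (fun p => T.depth (F p)) := by
    intro p q hpq
    have hpq' : T.depth (F p) = T.depth (F q) := hpq
    apply hFinj
    rcases T.anc_total (hFanc p) (hFanc q) with hh | hh
    · rcases T.eq_or_depth_lt hh with h' | h'
      · exact h'
      · omega
    · rcases T.eq_or_depth_lt hh with h' | h'
      · exact h'.symm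
      · omega
  have hcard := Fintype.card_le_of_injective
    (fun p : Fin n × Bool =>
      (⟨T.depth (F p) - 1, by have := T.one_le_depth (F p); have := hFd p; omega⟩ : Fin d))
    (by
      intro p q hpq
      apply hdinj
      simp only [Fin.mk.injEq] at hpq
      have := T.one_le_depth (F p)
      have := T.one_le_depth (F q)
      simp only []
      omega)
  simp only [Fintype.card_prod, Fintype.card_fin, Fintype.card_bool] at hcard
  omega

end
end

section
/- Let n, m, k, l be positive integers with m ≥ n. Then the treewidth of G_{n,m,k,l} is at most n + l. -/
open SimpleGraph

attribute [local instance] Classical.propDecidable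

noncomputable section

structure PTree (ι : Type) where
  par : ι → Option ι
  dep : ι → ℕ
  dep_par : ∀ i j, par i = some j → dep i = dep j + 1
  root : ι
  par_root : par root = none
  root_unique : ∀ i, par i = none → i = root

namespace PTree

variable {ι : Type} (P : PTree ι)

def graph : SimpleGraph ι where
  Adj a b := P.par a = some b ∨ P.par b = some a
  symm := ⟨fun a b h => h.symm⟩
  loopless := ⟨fun a h => by
    rcases h with h | h <;> · have := P.dep_par a a h; omega⟩

lemma adj_of_par {a b : ι} (h : P.par a = some b) : P.graph.Adj a b := Or.inl h

lemma reach_root : ∀ i, P.graph.Reachable i P.root := by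
  suffices H : ∀ d i, P.dep i ≤ d → P.graph.Reachable i P.root by
    exact fun i => H (P.dep i) i le_rfl
  intro d
  induction d with
  | zero =>
    intro i hi
    cases hp : P.par i with
    | none => rw [P.root_unique i hp]
    | some j => have := P.dep_par i j hp; omega
  | succ d ih =>
    intro i hi
    cases hp : P.par i with
    | none => rw [P.root_unique i hp]
    | some j =>
      have hdj := P.dep_par i j hp
      exact (P.adj_of_par hp).toWalk.reachable.trans (ih j (by omega))

lemma connected : P.graph.Connected := by
  rw [connected_iff]
  exact ⟨fun a b => (P.reach_root a).trans (P.reach_root b).symm, ⟨P.root⟩⟩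

/-- `y` is a (reflexive) ancestor of `x`. -/
def Desc (x y : ι) : Prop := Relation.ReflTransGen (fun p q => P.par p = some q) x y

lemma dep_le_of_desc {x y : ι} (h : P.Desc x y) : P.dep y ≤ P.dep x := by
  induction h with
  | refl => exact le_refl _
  | tail _ h ih => have := P.dep_par _ _ h; omega

lemma bridge {a b : ι} (h : P.par a = some b) : P.graph.IsBridge s(a, b) := by
  rw [isBridge_iff]
  intro hr
  rw [reachable_iff_reflTransGen] at hr
  have main : ∀ x, Relation.ReflTransGen (P.graph \ fromEdgeSet {s(a, b)}).Adj a x →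
      P.Desc x a := by
    intro x hr
    induction hr with
    | refl => exact Relation.ReflTransGen.refl
    | tail hxy hadj ih =>
      rename_i u v
      rcases hadj with ⟨hadj, hne⟩
      have hne' : s(u, v) ≠ s(a, b) := by
        intro hc
        exact hne (by rw [fromEdgeSet_adj]; exact ⟨by simp [hc], P.graph.ne_of_adj hadj⟩)
      rcases hadj with huv | hvu
      · rcases Relation.ReflTransGen.cases_head ih with rfl | ⟨z, hz, hza⟩
        · rw [h] at huv
          injection huv with h'
          exact absurd (by rw [h']) hne'
        · rw [hz] at huv
          injection huv with h'
          rw [← h']; exact hza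
      · exact Relation.ReflTransGen.head hvu ih
  have key : P.Desc b a := main b hr
  have h1 := P.dep_le_of_desc key
  have h2 := P.dep_par a b h
  omega

lemma isTree : P.graph.IsTree := by
  constructor
  · exact P.connected
  · rw [isAcyclic_iff_forall_adj_isBridge]
    intro v w hadj
    rcases hadj with h | h
    · exact P.bridge h
    · rw [Sym2.eq_swap]; exact P.bridge h

lemma induce_connected (S : Set ι) (r : ι) (hr : r ∈ S)
    (hcl : ∀ i ∈ S, i ≠ r → ∃ j ∈ S, P.par i = some j) :
    (P.graph.induce S).Connected := by
  rw [connected_iff]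
  refine ⟨?_, ⟨⟨r, hr⟩⟩⟩
  have key : ∀ d x (hx : x ∈ S), P.dep x ≤ d →
      (P.graph.induce S).Reachable ⟨x, hx⟩ ⟨r, hr⟩ := by
    intro d
    induction d with
    | zero =>
      intro x hx hd
      by_cases hxr : x = r
      · subst hxr; rfl
      · obtain ⟨j, hjS, hj⟩ := hcl x hx hxr
        have := P.dep_par x j hj; omega
    | succ d ih =>
      intro x hx hd
      by_cases hxr : x = r
      · subst hxr; rfl
      · obtain ⟨j, hjS, hj⟩ := hcl x hx hxr
        have hadj : (P.graph.induce S).Adj ⟨x, hx⟩ ⟨j, hjS⟩ := by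
          simp only [comap_adj, Function.Embedding.coe_subtype]
          exact P.adj_of_par hj
        have := P.dep_par x j hj
        exact hadj.toWalk.reachable.trans (ih j hjS (by omega))
  rintro ⟨a, ha⟩ ⟨b, hb⟩
  exact (key (P.dep a) a ha le_rfl).trans (key (P.dep b) b hb le_rfl).symm

end PTree

abbrev TNode (n m k l : ℕ) : Type :=
  (Fin m × Fin n) ⊕ ((Fin n × Fin 2 × Fin l) × Fin (2 ^ k - 1))

def tcol (m : ℕ) (e : Fin 2) (hm : 0 < m) : Fin m :=
  if e.val = 0 then ⟨0, hm⟩ else ⟨m - 1, by omega⟩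

def tpar (n m k l : ℕ) (hn : 0 < n) (hm : 0 < m) :
    TNode n m k l → Option (TNode n m k l)
  | .inl (j, i) =>
      if 0 < i.val then some (.inl (j, ⟨i.val - 1, by omega⟩))
      else if 0 < j.val then some (.inl (⟨j.val - 1, by omega⟩, ⟨n - 1, by omega⟩))
      else none
  | .inr (q, t) =>
      if 0 < t.val then some (.inr (q, ⟨t.val - 1, by omega⟩))
      else some (.inl (tcol m q.2.1 hm, q.1))

def tdep (n m k l : ℕ) (hm : 0 < m) : TNode n m k l → ℕ
  | .inl (j, i) => j.val * n + i.val + 1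
  | .inr (q, t) => (tcol m q.2.1 hm).val * n + q.1.val + 2 + t.val

def nxt (m : ℕ) (j : Fin m) : Fin m :=
  if h : j.val + 1 < m then ⟨j.val + 1, h⟩ else j

def spineBagFun (n m k l : ℕ) (j : Fin m) (i : Fin n) :
    Fin n ⊕ Fin l ⊕ Unit → CornerV n m k l
  | .inl i' => .inl (i', if i ≤ i' then j else nxt m j)
  | .inr (.inl w) => .inr (.inr w)
  | .inr (.inr _) => .inl (i, nxt m j)

def tbag (n m k l : ℕ) (hm : 0 < m) : TNode n m k l → Finset (CornerV n m k l)
  | .inl (j, i) => Finset.univ.image (spineBagFun n m k l j i)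
  | .inr (q, t) =>
      {.inr (.inl (q, t)), .inr (.inr q.2.2),
        if 0 < t.val then .inr (.inl (q, ⟨t.val - 1, by omega⟩))
          else .inl (q.1, tcol m q.2.1 hm)}

def thePTree (n m k l : ℕ) (hn : 0 < n) (hm : 0 < m) : PTree (TNode n m k l) where
  par := tpar n m k l hn hm
  dep := tdep n m k l hm
  root := .inl (⟨0, hm⟩, ⟨0, hn⟩)
  par_root := by simp [tpar]
  root_unique := by
    rintro (⟨j, i⟩ | ⟨q, t⟩) h
    · simp only [tpar] at h
      split_ifs at h with hi hj
      have hj0 : j = ⟨0, hm⟩ := by apply Fin.ext; simpa using by omega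
      have hi0 : i = ⟨0, hn⟩ := by apply Fin.ext; simpa using by omega
      rw [hj0, hi0]
    · simp only [tpar] at h
      split_ifs at h
  dep_par := by
    rintro (⟨j, i⟩ | ⟨q, t⟩) x h
    · simp only [tpar] at h
      split_ifs at h with hi hj
      · cases h; simp only [tdep]; omega
      · cases h
        simp only [tdep]
        have h1 : (j.val - 1) + 1 = j.val := by omega
        have h2 : j.val * n = (j.val - 1) * n + n := by
          calc j.val * n = ((j.val - 1) + 1) * n := by rw [h1]
          _ = (j.val - 1) * n + n := by ring
        have := i.isLt
        omega
    · simp only [tpar] at h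
      split_ifs at h with ht
      · cases h; simp only [tdep]; omega
      · cases h; simp only [tdep]; omega


section BagLemmas

variable (n m k l : ℕ)

lemma nxt_eq {m : ℕ} (j j' : Fin m) (h : j.val + 1 = j'.val) : nxt m j = j' := by
  unfold nxt
  rw [dif_pos (h ▸ j'.isLt)]
  exact Fin.ext h

lemma nxt_cases {m : ℕ} (j j' : Fin m) (h : nxt m j = j') :
    (j.val + 1 = j'.val) ∨ (j = j' ∧ ¬ j.val + 1 < m) := by
  unfold nxt at h
  split_ifs at h with h1
  · left; rw [← h]
  · right; exact ⟨h, h1⟩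

lemma mem_spineBag_w (hm : 0 < m) (j : Fin m) (i : Fin n) (w : Fin l) :
    (Sum.inr (Sum.inr w) : CornerV n m k l) ∈ tbag n m k l hm (.inl (j, i)) := by
  simp only [tbag, Finset.mem_image]
  exact ⟨.inr (.inl w), Finset.mem_univ _, rfl⟩

lemma mem_spineBag_grid_iff (hm : 0 < m) (j : Fin m) (i : Fin n) (i₀ : Fin n) (j₀ : Fin m) :
    (Sum.inl (i₀, j₀) : CornerV n m k l) ∈ tbag n m k l hm (.inl (j, i)) ↔
      ((i ≤ i₀ ∧ j = j₀) ∨ (i₀ < i ∧ nxt m j = j₀) ∨ (i = i₀ ∧ nxt m j = j₀)) := by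
  simp only [tbag, Finset.mem_image]
  constructor
  · rintro ⟨a, -, ha⟩
    rcases a with i' | w | u
    · simp only [spineBagFun, Sum.inl.injEq, Prod.mk.injEq] at ha
      obtain ⟨rfl, hcol⟩ := ha
      by_cases hle : i ≤ i'
      · rw [if_pos hle] at hcol
        exact Or.inl ⟨hle, hcol⟩
      · rw [if_neg hle] at hcol
        exact Or.inr (Or.inl ⟨lt_of_not_ge hle, hcol⟩)
    · exact absurd ha (by simp [spineBagFun])
    · simp only [spineBagFun, Sum.inl.injEq, Prod.mk.injEq] at ha
      exact Or.inr (Or.inr ha)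
  · rintro (⟨hle, rfl⟩ | ⟨hlt, hnx⟩ | ⟨rfl, hnx⟩)
    · exact ⟨.inl i₀, Finset.mem_univ _, by simp [spineBagFun, if_pos hle]⟩
    · exact ⟨.inl i₀, Finset.mem_univ _, by
        simp [spineBagFun, if_neg (not_le_of_gt hlt), hnx]⟩
    · exact ⟨.inr (.inr ()), Finset.mem_univ _, by simp [spineBagFun, hnx]⟩

lemma not_mem_spineBag_chain (hm : 0 < m) (j : Fin m) (i : Fin n)
    (pq : (Fin n × Fin 2 × Fin l) × Fin (2 ^ k - 1)) :
    (Sum.inr (Sum.inl pq) : CornerV n m k l) ∉ tbag n m k l hm (.inl (j, i)) := by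
  simp only [tbag, Finset.mem_image]
  rintro ⟨a, -, ha⟩
  rcases a with a | a | a <;> simp [spineBagFun] at ha

lemma mem_chainBag_iff (hm : 0 < m) (q : Fin n × Fin 2 × Fin l) (t : Fin (2 ^ k - 1))
    (x : CornerV n m k l) :
    x ∈ tbag n m k l hm (.inr (q, t)) ↔
      x = .inr (.inl (q, t)) ∨ x = .inr (.inr q.2.2) ∨
        x = (if ht : 0 < t.val then .inr (.inl (q, ⟨t.val - 1, by omega⟩))
          else .inl (q.1, tcol m q.2.1 hm)) := by
  simp only [tbag, Finset.mem_insert, Finset.mem_singleton]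
  constructor
  · rintro (h | h | h)
    · exact Or.inl h
    · exact Or.inr (Or.inl h)
    · refine Or.inr (Or.inr ?_)
      split_ifs at h ⊢ <;> exact h
  · rintro (h | h | h)
    · exact Or.inl h
    · exact Or.inr (Or.inl h)
    · refine Or.inr (Or.inr ?_)
      split_ifs at h ⊢ <;> exact h

end BagLemmas

section Cover

lemma tcol_val {m : ℕ} (e : Fin 2) (hm : 0 < m) :
    (tcol m e hm).val = if e.val = 0 then 0 else m - 1 := by
  unfold tcol; split_ifs <;> rfl

lemma cover (n m k l : ℕ) (hn : 0 < n) (hm : 0 < m) :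
    ∀ u v : CornerV n m k l, (corner n m k l).Adj u v →
      ∃ i, u ∈ tbag n m k l hm i ∧ v ∈ tbag n m k l hm i := by
  have key : ∀ u v : CornerV n m k l,
      (match u, v with
        | .inl a, .inl b => (gridGraph n m).Adj a b
        | .inl a, .inr (.inl (⟨i, e, _⟩, t)) =>
            a.1 = i ∧ t.val = 0 ∧
              ((e.val = 0 ∧ a.2.val = 0) ∨ (e.val = 1 ∧ a.2.val = m - 1))
        | .inr (.inl (p, t)), .inr (.inl (q, s)) => p = q ∧ t.val + 1 = s.val
        | .inr (.inl (⟨_, _, w⟩, t)), .inr (.inr w') => w = w' ∧ t.val = 2 ^ k - 2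
        | _, _ => False) →
      ∃ i, u ∈ tbag n m k l hm i ∧ v ∈ tbag n m k l hm i := by
    rintro (⟨i₁, j₁⟩ | ⟨⟨⟨qi, qe, qw⟩, t⟩⟩ | w) (⟨i₂, j₂⟩ | ⟨⟨⟨qi', qe', qw'⟩, s⟩⟩ | w') h
    case inl.inl =>
      have hd : Nat.dist i₁.val i₂.val + Nat.dist j₁.val j₂.val = 1 := h
      simp only [Nat.dist] at hd
      have hc : (i₁.val = i₂.val ∧ j₁.val + 1 = j₂.val) ∨
          (i₁.val = i₂.val ∧ j₂.val + 1 = j₁.val) ∨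
          (i₁.val + 1 = i₂.val ∧ j₁.val = j₂.val) ∨
          (i₂.val + 1 = i₁.val ∧ j₁.val = j₂.val) := by omega
      rcases hc with ⟨h1, h2⟩ | ⟨h1, h2⟩ | ⟨h1, h2⟩ | ⟨h1, h2⟩
      · have hi : i₁ = i₂ := Fin.ext h1
        refine ⟨.inl (j₁, i₁), ?_, ?_⟩ <;> rw [mem_spineBag_grid_iff]
        · exact Or.inl ⟨le_refl _, rfl⟩
        · exact Or.inr (Or.inr ⟨hi, nxt_eq _ _ h2⟩)
      · have hi : i₁ = i₂ := Fin.ext h1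
        refine ⟨.inl (j₂, i₁), ?_, ?_⟩ <;> rw [mem_spineBag_grid_iff]
        · exact Or.inr (Or.inr ⟨rfl, nxt_eq _ _ h2⟩)
        · exact Or.inl ⟨le_of_eq hi, rfl⟩
      · have hj : j₁ = j₂ := Fin.ext h2
        refine ⟨.inl (j₁, i₁), ?_, ?_⟩ <;> rw [mem_spineBag_grid_iff]
        · exact Or.inl ⟨le_refl _, rfl⟩
        · exact Or.inl ⟨by rw [Fin.le_def]; omega, hj⟩
      · have hj : j₁ = j₂ := Fin.ext h2
        refine ⟨.inl (j₁, i₂), ?_, ?_⟩ <;> rw [mem_spineBag_grid_iff]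
        · exact Or.inl ⟨by rw [Fin.le_def]; omega, rfl⟩
        · exact Or.inl ⟨le_refl _, hj⟩
    case inl.inr.inl =>
      obtain ⟨h1, h2, h3⟩ := h
      refine ⟨.inr ((qi', qe', qw'), s), ?_, ?_⟩ <;> rw [mem_chainBag_iff]
      · refine Or.inr (Or.inr ?_)
        rw [dif_neg (by omega)]
        refine congrArg _ (Prod.ext h1 (Fin.ext ?_))
        rw [tcol_val]
        rcases h3 with ⟨he, ha⟩ | ⟨he, ha⟩
        · rw [if_pos he]; exact ha
        · have hne0 : ¬ (qe'.val = 0) := by omega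
          rw [if_neg hne0]; exact ha
      · exact Or.inl rfl
    case inr.inl.inr.inl =>
      obtain ⟨h1, h2⟩ := h
      refine ⟨.inr ((qi', qe', qw'), s), ?_, ?_⟩ <;> rw [mem_chainBag_iff]
      · refine Or.inr (Or.inr ?_)
        rw [dif_pos (by omega)]
        rw [← h1]
        exact congrArg _ (congrArg _ (congrArg _ (Fin.ext (by simp; omega))))
      · exact Or.inl rfl
    case inr.inl.inr.inr =>
      obtain ⟨h1, h2⟩ := h
      refine ⟨.inr ((qi, qe, qw), t), ?_, ?_⟩ <;> rw [mem_chainBag_iff]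
      · exact Or.inl rfl
      · exact Or.inr (Or.inl (by rw [← h1]))
    all_goals exact h.elim
  intro u v huv
  rw [corner, fromRel_adj] at huv
  obtain ⟨hne, h | h⟩ := huv
  · exact key u v h
  · obtain ⟨i, h1, h2⟩ := key v u h
    exact ⟨i, h2, h1⟩

end Cover

section Conn

lemma thePTree_par (n m k l : ℕ) (hn : 0 < n) (hm : 0 < m) :
    (thePTree n m k l hn hm).par = tpar n m k l hn hm := rfl

lemma conn_w (n m k l : ℕ) (hn : 0 < n) (hm : 0 < m) (w₀ : Fin l) :
    ((thePTree n m k l hn hm).graph.induce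
      {i | (Sum.inr (Sum.inr w₀) : CornerV n m k l) ∈ tbag n m k l hm i}).Connected := by
  apply (thePTree n m k l hn hm).induce_connected _ (Sum.inl (⟨0, hm⟩, ⟨0, hn⟩))
  · exact mem_spineBag_w n m k l hm _ _ _
  · rintro (⟨j, i⟩ | ⟨q, t⟩) hmem hne
    · by_cases hi : 0 < i.val
      · refine ⟨.inl (j, ⟨i.val - 1, by omega⟩), mem_spineBag_w n m k l hm _ _ _, ?_⟩
        rw [thePTree_par]; simp only [tpar]; rw [if_pos hi]
      · by_cases hj : 0 < j.val
        · refine ⟨.inl (⟨j.val - 1, by omega⟩, ⟨n - 1, by omega⟩),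
            mem_spineBag_w n m k l hm _ _ _, ?_⟩
          rw [thePTree_par]; simp only [tpar]; rw [if_neg hi, if_pos hj]
        · exact absurd (by
            show Sum.inl (j, i) = _
            rw [show j = (⟨0, hm⟩ : Fin m) from Fin.ext (show j.val = 0 by omega),
              show i = (⟨0, hn⟩ : Fin n) from Fin.ext (show i.val = 0 by omega)]) hne
    · have hq : q.2.2 = w₀ := by
        rw [Set.mem_setOf_eq, mem_chainBag_iff] at hmem
        rcases hmem with h | h | h
        · exact absurd h (by simp)
        · simp only [Sum.inr.injEq] at h; exact h.symm
        · rcases Nat.eq_zero_or_pos t.val with ht | ht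
          · rw [dif_neg (by omega)] at h; simp at h
          · rw [dif_pos ht] at h; simp at h
      by_cases ht : 0 < t.val
      · refine ⟨.inr (q, ⟨t.val - 1, by omega⟩), ?_, ?_⟩
        · rw [Set.mem_setOf_eq, mem_chainBag_iff]
          exact Or.inr (Or.inl (by rw [hq]))
        · rw [thePTree_par]; simp only [tpar]; rw [if_pos ht]
      · refine ⟨.inl (tcol m q.2.1 hm, q.1), mem_spineBag_w n m k l hm _ _ _, ?_⟩
        rw [thePTree_par]; simp only [tpar]; rw [if_neg ht]

lemma conn_chain (n m k l : ℕ) (hn : 0 < n) (hm : 0 < m)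
    (q₀ : Fin n × Fin 2 × Fin l) (t₀ : Fin (2 ^ k - 1)) :
    ((thePTree n m k l hn hm).graph.induce
      {i | (Sum.inr (Sum.inl (q₀, t₀)) : CornerV n m k l) ∈ tbag n m k l hm i}).Connected := by
  apply (thePTree n m k l hn hm).induce_connected _ (Sum.inr (q₀, t₀))
  · rw [Set.mem_setOf_eq, mem_chainBag_iff]
    exact Or.inl rfl
  · rintro (⟨j, i⟩ | ⟨q, t⟩) hmem hne
    · exact absurd hmem (not_mem_spineBag_chain n m k l hm j i _)
    · rw [Set.mem_setOf_eq, mem_chainBag_iff] at hmem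
      rcases hmem with h | h | h
      · simp only [Sum.inr.injEq, Sum.inl.injEq, Prod.mk.injEq] at h
        obtain ⟨rfl, rfl⟩ := h
        exact absurd rfl hne
      · exact absurd h (by simp)
      · rcases Nat.eq_zero_or_pos t.val with ht | ht
        · rw [dif_neg (by omega)] at h
          exact absurd h (by simp)
        · rw [dif_pos ht] at h
          simp only [Sum.inr.injEq, Sum.inl.injEq, Prod.mk.injEq] at h
          obtain ⟨hq, ht0⟩ := h
          refine ⟨.inr (q, ⟨t.val - 1, by omega⟩), ?_, ?_⟩
          · rw [Set.mem_setOf_eq, mem_chainBag_iff]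
            exact Or.inl (by rw [hq, ht0])
          · rw [thePTree_par]; simp only [tpar]; rw [if_pos ht]

lemma conn_grid (n m k l : ℕ) (hn : 0 < n) (hm : 0 < m) (i₀ : Fin n) (j₀ : Fin m) :
    ((thePTree n m k l hn hm).graph.induce
      {i | (Sum.inl (i₀, j₀) : CornerV n m k l) ∈ tbag n m k l hm i}).Connected := by
  obtain ⟨r, hrmem, hreq⟩ : ∃ r : TNode n m k l,
      ((Sum.inl (i₀, j₀) : CornerV n m k l) ∈ tbag n m k l hm r) ∧
      ∀ (j : Fin m) (i : Fin n),
        ((j.val + 1 = j₀.val ∧ i = i₀) ∨ (j₀.val = 0 ∧ j.val = 0 ∧ i.val = 0)) →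
        (Sum.inl (j, i) : TNode n m k l) = r := by
    rcases Nat.eq_zero_or_pos j₀.val with h0 | h0
    · refine ⟨.inl (j₀, ⟨0, hn⟩), ?_, ?_⟩
      · rw [mem_spineBag_grid_iff]
        exact Or.inl ⟨(Fin.le_def).mpr (Nat.zero_le _), rfl⟩
      · rintro j i (⟨h1, h2⟩ | ⟨-, h1, h2⟩)
        · omega
        · exact congrArg _ (Prod.ext (Fin.ext (show j.val = j₀.val by omega))
            (Fin.ext (show i.val = 0 from h2)))
    · refine ⟨.inl (⟨j₀.val - 1, by omega⟩, i₀), ?_, ?_⟩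
      · rw [mem_spineBag_grid_iff]
        refine Or.inr (Or.inr ⟨rfl, nxt_eq _ _ ?_⟩)
        show j₀.val - 1 + 1 = j₀.val
        omega
      · rintro j i (⟨h1, rfl⟩ | ⟨h1, -⟩)
        · exact congrArg _ (Prod.ext (Fin.ext (show j.val = j₀.val - 1 by omega)) rfl)
        · omega
  apply (thePTree n m k l hn hm).induce_connected _ r hrmem
  rintro (⟨j, i⟩ | ⟨q, t⟩) hmem hne
  · rw [Set.mem_setOf_eq, mem_spineBag_grid_iff] at hmem
    by_cases hi : 0 < i.val
    · -- parent is (j, i-1)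
      refine ⟨.inl (j, ⟨i.val - 1, by omega⟩), ?_, ?_⟩
      · rw [Set.mem_setOf_eq, mem_spineBag_grid_iff]
        rcases hmem with ⟨hle, rfl⟩ | ⟨hlt, hnx⟩ | ⟨heq, hnx⟩
        · rw [Fin.le_def] at hle
          exact Or.inl ⟨by rw [Fin.le_def]; show i.val - 1 ≤ i₀.val; omega, rfl⟩
        · rw [Fin.lt_def] at hlt
          rcases lt_or_eq_of_le (by omega : i₀.val ≤ i.val - 1) with h' | h'
          · exact Or.inr (Or.inl ⟨by rw [Fin.lt_def]; exact h', hnx⟩)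
          · exact Or.inr (Or.inr ⟨Fin.ext h'.symm, hnx⟩)
        · -- i = i₀
          rcases nxt_cases j j₀ hnx with hj1 | ⟨hjj, -⟩
          · exact absurd (hreq j i (Or.inl ⟨hj1, heq⟩)) hne
          · refine Or.inl ⟨?_, hjj⟩
            rw [Fin.ext_iff] at heq
            rw [Fin.le_def]
            show i.val - 1 ≤ i₀.val
            omega
      · rw [thePTree_par]; simp only [tpar]; rw [if_pos hi]
    · by_cases hj : 0 < j.val
      · -- parent is (j-1, n-1)
        have hpar : (thePTree n m k l hn hm).par (.inl (j, i)) =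
            some (.inl (⟨j.val - 1, by omega⟩, ⟨n - 1, by omega⟩)) := by
          rw [thePTree_par]; simp only [tpar]; rw [if_neg hi, if_pos hj]
        have hnx' : nxt m (⟨j.val - 1, by omega⟩ : Fin m) = j :=
          nxt_eq _ _ (by show j.val - 1 + 1 = j.val; omega)
        have hmem' : ∀ (hj0 : j = j₀), (Sum.inl (i₀, j₀) : CornerV n m k l) ∈
            tbag n m k l hm (.inl (⟨j.val - 1, by omega⟩, ⟨n - 1, by omega⟩)) := by
          intro hj0
          rw [mem_spineBag_grid_iff]
          rcases lt_or_eq_of_le (by have := i₀.isLt; omega : i₀.val ≤ n - 1) with h' | h'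
          · exact Or.inr (Or.inl ⟨by rw [Fin.lt_def]; exact h', hj0 ▸ hnx'⟩)
          · exact Or.inr (Or.inr ⟨Fin.ext h'.symm, hj0 ▸ hnx'⟩)
        rcases hmem with ⟨hle, hj0⟩ | ⟨hlt, hnx⟩ | ⟨heq, hnx⟩
        · exact ⟨_, hmem' hj0, hpar⟩
        · rw [Fin.lt_def] at hlt; omega
        · rcases nxt_cases j j₀ hnx with hj1 | ⟨hjj, -⟩
          · exact absurd (hreq j i (Or.inl ⟨hj1, heq⟩)) hne
          · exact ⟨_, hmem' hjj, hpar⟩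
      · -- i = 0, j = 0 : node must be r
        exfalso
        apply hne
        rcases hmem with ⟨hle, hj0⟩ | ⟨hlt, hnx⟩ | ⟨heq, hnx⟩
        · refine hreq j i (Or.inr ⟨?_, by omega, by omega⟩)
          rw [Fin.ext_iff] at hj0; omega
        · rw [Fin.lt_def] at hlt; omega
        · rcases nxt_cases j j₀ hnx with hj1 | ⟨hjj, -⟩
          · exact hreq j i (Or.inl ⟨hj1, heq⟩)
          · refine hreq j i (Or.inr ⟨?_, by omega, by omega⟩)
            rw [Fin.ext_iff] at hjj; omega
  · rw [Set.mem_setOf_eq, mem_chainBag_iff] at hmem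
    rcases hmem with h | h | h
    · exact absurd h (by simp)
    · exact absurd h (by simp)
    · rcases Nat.eq_zero_or_pos t.val with ht | ht
      · rw [dif_neg (by omega)] at h
        simp only [Sum.inl.injEq, Prod.mk.injEq] at h
        obtain ⟨h1, h2⟩ := h
        refine ⟨.inl (tcol m q.2.1 hm, q.1), ?_, ?_⟩
        · rw [Set.mem_setOf_eq, mem_spineBag_grid_iff]
          exact Or.inl ⟨le_of_eq h1.symm, h2.symm⟩
        · rw [thePTree_par]; simp only [tpar]; rw [if_neg (by omega : ¬ 0 < t.val)]
      · rw [dif_pos ht] at h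
        exact absurd h (by simp)

end Conn

/-- For positive integers `n, m, k, l` with `m ≥ n`, the treewidth
of `G_{n,m,k,l}` is at most `n + l`. -/
theorem statement12 (n m k l : ℕ) (hn : 0 < n) (hk : 0 < k) (hl : 0 < l)
    (hm : n ≤ m) :
    treewidth (corner n m k l) ≤ n + l := by
  have hm0 : 0 < m := lt_of_lt_of_le hn hm
  apply Nat.sInf_le
  refine ⟨TNode n m k l, inferInstance, (thePTree n m k l hn hm0).graph,
    tbag n m k l hm0, ⟨(thePTree n m k l hn hm0).isTree, ?_, ?_, ?_⟩, ?_⟩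
  · rintro (⟨i, j⟩ | ⟨q, t⟩ | w)
    · exact ⟨.inl (j, i), by rw [mem_spineBag_grid_iff]; exact Or.inl ⟨le_refl _, rfl⟩⟩
    · exact ⟨.inr (q, t), by rw [mem_chainBag_iff]; exact Or.inl rfl⟩
    · exact ⟨.inl (⟨0, hm0⟩, ⟨0, hn⟩), mem_spineBag_w n m k l hm0 _ _ _⟩
  · exact cover n m k l hn hm0
  · rintro (⟨i, j⟩ | ⟨q, t⟩ | w)
    · exact conn_grid n m k l hn hm0 i j
    · exact conn_chain n m k l hn hm0 q t
    · exact conn_w n m k l hn hm0 w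
  · rintro (⟨j, i⟩ | ⟨q, t⟩)
    · have h1 : (tbag n m k l hm0 (.inl (j, i))).card ≤
          (Finset.univ : Finset (Fin n ⊕ Fin l ⊕ Unit)).card := by
        simp only [tbag]
        exact Finset.card_image_le
      rw [Finset.card_univ] at h1
      simp only [Fintype.card_sum, Fintype.card_fin, Fintype.card_unit] at h1
      omega
    · have h3 : (tbag n m k l hm0 (.inr (q, t))).card ≤ 3 := by
        simp only [tbag]
        refine le_trans (Finset.card_insert_le _ _)
          (le_trans (Nat.add_le_add_right (Finset.card_insert_le _ _) 1) (by simp))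
      omega

end
end

section
/- Let G be a finite simple graph that has a minimal separator S with |S| ≥ 3. Then G contains the complete bipartite graph K_{2,3} as a minor. -/
open SimpleGraph

attribute [local instance] Classical.propDecidable

noncomputable section

section Helpers

open SimpleGraph

variable {V : Type} {G : SimpleGraph V} {S : Finset V} {a b s x c : V}

/-- The set of vertices reachable from `a` by walks avoiding `S`. -/
def Avoid (G : SimpleGraph V) (S : Finset V) (a : V) : Set V :=
  {x | ∃ w : G.Walk a x, ∀ y ∈ w.support, y ∉ S}

lemma avoid_self (ha : a ∉ S) : a ∈ Avoid G S a :=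
  ⟨SimpleGraph.Walk.nil, by simp [ha]⟩

lemma avoid_not_mem (hx : x ∈ Avoid G S a) : x ∉ S := by
  obtain ⟨w, hw⟩ := hx
  exact hw x w.end_mem_support

lemma avoid_step (hx : x ∈ Avoid G S a) (h : G.Adj x c) (hc : c ∉ S) :
    c ∈ Avoid G S a := by
  obtain ⟨w, hw⟩ := hx
  refine ⟨w.concat h, ?_⟩
  intro y hy
  rw [SimpleGraph.Walk.support_concat] at hy
  simp only [List.concat_eq_append, List.mem_append, List.mem_singleton] at hy
  rcases hy with h1 | h1
  · exact hw y h1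
  · subst h1; exact hc

lemma avoid_reach_aux :
    ∀ {p q : V} (w : G.Walk p q), (∀ y ∈ w.support, y ∉ S) →
      ∀ (hp : p ∈ Avoid G S a) (hq : q ∈ Avoid G S a),
      (G.induce (Avoid G S a)).Reachable ⟨p, hp⟩ ⟨q, hq⟩ := by
  intro p q w
  induction w with
  | nil => intro _ hp hq; exact SimpleGraph.Reachable.refl _
  | @cons u v r h pw ih =>
    intro hsup hu hq
    have hv : v ∉ S := hsup v (by simp)
    have hv' : v ∈ Avoid G S a := avoid_step hu h hv
    have h1 : (G.induce (Avoid G S a)).Adj ⟨u, hu⟩ ⟨v, hv'⟩ := h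
    exact h1.reachable.trans (ih (fun y hy => hsup y (by simp [hy])) hv' hq)

lemma avoid_connected (ha : a ∉ S) : (G.induce (Avoid G S a)).Connected := by
  rw [SimpleGraph.connected_iff]
  refine ⟨?_, ⟨⟨a, avoid_self ha⟩⟩⟩
  intro x y
  have hx : ∀ z : Avoid G S a,
      (G.induce (Avoid G S a)).Reachable ⟨a, avoid_self ha⟩ z := by
    rintro ⟨z, hz⟩
    obtain ⟨w, hw⟩ := hz
    exact avoid_reach_aux w hw (avoid_self ha) ⟨w, hw⟩
  exact (hx x).symm.trans (hx y)

lemma avoid_neighbor (hs : s ∈ S) :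
    ∀ {x b' : V} (w : G.Walk x b'), x ∈ Avoid G S a →
      (∀ y ∈ w.support, y ∈ S → y = s) → s ∈ w.support →
      ∃ u ∈ Avoid G S a, G.Adj u s := by
  intro x b' w
  induction w with
  | nil =>
    intro hx _ hsm
    simp only [SimpleGraph.Walk.support_nil, List.mem_singleton] at hsm
    subst hsm
    exact absurd hs (avoid_not_mem hx)
  | @cons u v r h pw ih =>
    intro hu hS hsm
    have hus : u ≠ s := fun he => absurd hs (he ▸ avoid_not_mem hu)
    have hsm' : s ∈ pw.support := by
      rcases (by simpa using hsm : s = u ∨ s ∈ pw.support) with h1 | h1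
      · exact absurd h1.symm hus
      · exact h1
    by_cases hvs : v = s
    · exact ⟨u, hu, hvs ▸ h⟩
    · have hv : v ∉ S := fun hvS => hvs (hS v (by simp) hvS)
      exact ih (avoid_step hu h hv) (fun y hy hyS => hS y (by simp [hy]) hyS) hsm'

end Helpers

/-- If a finite simple graph `G` has a minimal separator of size at
least 3, then `G` contains `K_{2,3}` as a minor. -/
theorem statement16 {V : Type} [Fintype V] (G : SimpleGraph V)
    (S : Finset V) (hS : IsMinSep G S) (h3 : 3 ≤ S.card) :
    IsMinor (completeBipartiteGraph (Fin 2) (Fin 3)) G := by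
  obtain ⟨a, b, habs, hmin⟩ := hS
  obtain ⟨haS, hbS, hsep⟩ := habs
  have key : ∀ s ∈ S, (∃ u ∈ Avoid G S a, G.Adj u s) ∧
      (∃ u ∈ Avoid G S b, G.Adj u s) := by
    intro s hs
    have hne : ¬ IsABSep G a b (S.erase s) := hmin _ (Finset.erase_ssubset hs)
    have ha' : a ∉ S.erase s := fun h => haS (Finset.mem_of_mem_erase h)
    have hb' : b ∉ S.erase s := fun h => hbS (Finset.mem_of_mem_erase h)
    have hex : ∃ w : G.Walk a b, ∀ x ∈ w.support, x ∉ S.erase s := by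
      by_contra hc
      push_neg at hc
      exact hne ⟨ha', hb', hc⟩
    obtain ⟨w, hw⟩ := hex
    obtain ⟨x, hxsup, hxS⟩ := hsep w
    have hxs : x = s := by
      by_contra hxs
      exact hw x hxsup (Finset.mem_erase.mpr ⟨hxs, hxS⟩)
    subst hxs
    have hall : ∀ y ∈ w.support, y ∈ S → y = x := by
      intro y hy hyS
      by_contra hys
      exact hw y hy (Finset.mem_erase.mpr ⟨hys, hyS⟩)
    constructor
    · exact avoid_neighbor hxS w (avoid_self haS) hall hxsup
    · refine avoid_neighbor hxS w.reverse (avoid_self hbS) ?_ ?_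
      · intro y hy
        exact hall y (by
          rwa [SimpleGraph.Walk.support_reverse, List.mem_reverse] at hy)
      · rwa [SimpleGraph.Walk.support_reverse, List.mem_reverse]
  have hdisj : Disjoint (Avoid G S a) (Avoid G S b) := by
    rw [Set.disjoint_left]
    rintro x ⟨w1, hw1⟩ ⟨w2, hw2⟩
    obtain ⟨y, hy, hyS⟩ := hsep (w1.append w2.reverse)
    rw [SimpleGraph.Walk.support_append] at hy
    rcases List.mem_append.mp hy with h1 | h1
    · exact hw1 y h1 hyS
    · have h2 := List.mem_of_mem_tail h1
      rw [SimpleGraph.Walk.support_reverse, List.mem_reverse] at h2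
      exact hw2 y h2 hyS
  obtain ⟨T, hTS, hT3⟩ := Finset.exists_subset_card_eq h3
  obtain ⟨s1, s2, s3, h12, h13, h23, hTeq⟩ := Finset.card_eq_three.mp hT3
  have hfS : ∀ i : Fin 3, (![s1, s2, s3]) i ∈ S := by
    intro i
    fin_cases i <;> exact hTS (by simp [hTeq])
  have hfinj : Function.Injective ![s1, s2, s3] := by
    intro i j h
    fin_cases i <;> fin_cases j <;> simp_all
  set f : Fin 3 → V := ![s1, s2, s3] with hf
  refine ⟨Sum.elim (![Avoid G S a, Avoid G S b]) (fun i => {f i}), ?_, ?_, ?_⟩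
  · rintro (j | i)
    · fin_cases j
      · exact avoid_connected haS
      · exact avoid_connected hbS
    · rw [SimpleGraph.connected_iff]
      refine ⟨?_, ⟨⟨f i, rfl⟩⟩⟩
      rintro ⟨x, hx⟩ ⟨y, hy⟩
      have hxy : x = y := by
        simp only [Sum.elim_inr, Set.mem_singleton_iff] at hx hy
        rw [hx, hy]
      subst hxy
      rfl
  · rintro (j | i) (j' | i') hne
    · fin_cases j <;> fin_cases j'
      · exact (hne rfl).elim
      · exact hdisj
      · exact hdisj.symm
      · exact (hne rfl).elim
    · refine Set.disjoint_singleton_right.mpr (fun h => ?_)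
      fin_cases j <;> exact avoid_not_mem h (hfS i')
    · refine Set.disjoint_singleton_left.mpr (fun h => ?_)
      fin_cases j' <;> exact avoid_not_mem h (hfS i)
    · exact Set.disjoint_singleton.mpr (fun h => hne (by rw [hfinj h]))
  · rintro (j | i) (j' | i') hadj
    · simp [completeBipartiteGraph] at hadj
    · obtain ⟨hA, hB⟩ := key (f i') (hfS i')
      fin_cases j
      · obtain ⟨u, hu, hadj'⟩ := hA
        exact ⟨u, hu, f i', rfl, hadj'⟩
      · obtain ⟨u, hu, hadj'⟩ := hB
        exact ⟨u, hu, f i', rfl, hadj'⟩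
    · obtain ⟨hA, hB⟩ := key (f i) (hfS i)
      fin_cases j'
      · obtain ⟨u, hu, hadj'⟩ := hA
        exact ⟨f i, rfl, u, hu, hadj'.symm⟩
      · obtain ⟨u, hu, hadj'⟩ := hB
        exact ⟨f i, rfl, u, hu, hadj'.symm⟩
    · simp [completeBipartiteGraph] at hadj

end
end
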